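/- arXiv:1703.02960 — 9 statements merged into one kernel-verified Lean document; each statement's English description precedes it below -/
import Mathlib

section
/- Let V be an n×n complex matrix that is a partial isometry, and let ζ be an eigenvalue of V with |ζ| = 1. Then the algebraic multiplicity of ζ as an eigenvalue of V equals its geometric multiplicity. -/
open Matrix

def IsPartialIsometry {n : Type*} [Fintype n] (V : Matrix n n ℂ) : Prop :=
  V * Vᴴ * V = V

def MatrixSimilar {n : Type*} [Fintype n] [DecidableEq n] (A B : Matrix n n ℂ) : Prop :=
  ∃ S : Matrix n n ℂ, IsUnit S ∧ A = S * B * S⁻¹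

noncomputable def nullity {n : Type*} [Fintype n] (A : Matrix n n ℂ) : ℕ :=
  Module.finrank ℂ (LinearMap.ker A.mulVecLin)

noncomputable def algMult {n : Type*} [Fintype n] [DecidableEq n]
    (A : Matrix n n ℂ) (lam : ℂ) : ℕ :=
  A.charpoly.rootMultiplicity lam

noncomputable def geoMult {n : Type*} [Fintype n] [DecidableEq n]
    (A : Matrix n n ℂ) (lam : ℂ) : ℕ :=
  nullity (A - lam • 1)

def jordanBlock (m : ℕ) (μ : ℂ) : Matrix (Fin m) (Fin m) ℂ :=
  Matrix.of fun i j => if (i : ℕ) = (j : ℕ) then μ else if (i : ℕ) + 1 = (j : ℕ) then 1 else 0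

open Polynomial in
lemma aux_charpoly_sub_smul_one {n : ℕ} (A : Matrix (Fin n) (Fin n) ℂ) (ζ : ℂ) :
    (A - ζ • 1).charpoly = (A.charpoly).comp (X + C ζ) := by
  have hf : (A.charpoly).comp (X + C ζ) = eval₂RingHom C (X + C ζ) A.charpoly := rfl
  rw [hf, Matrix.charpoly, Matrix.charpoly, RingHom.map_det]
  congr 1
  apply Matrix.ext
  intro i j
  rw [RingHom.mapMatrix_apply]
  by_cases h : i = j
  · subst h
    simp only [Matrix.map_apply, charmatrix_apply_eq, coe_eval₂RingHom, eval₂_sub, eval₂_X,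
      eval₂_C, Matrix.sub_apply, Matrix.smul_apply, Matrix.one_apply_eq, smul_eq_mul, mul_one,
      map_sub]
    ring
  · simp only [Matrix.map_apply, charmatrix_apply_ne _ _ _ h, coe_eval₂RingHom, eval₂_neg,
      eval₂_C, Matrix.sub_apply, Matrix.smul_apply, Matrix.one_apply_ne h, smul_eq_mul, mul_zero,
      sub_zero]

lemma aux_adj {n : ℕ} (A : Matrix (Fin n) (Fin n) ℂ) (a b : Fin n → ℂ) :
    star (A *ᵥ a) ⬝ᵥ b = star a ⬝ᵥ (Aᴴ *ᵥ b) := by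
  rw [star_mulVec, dotProduct_mulVec]

open ComplexOrder in
lemma aux_key {n : ℕ} (V : Matrix (Fin n) (Fin n) ℂ) (hV : V * Vᴴ * V = V)
    (ζ : ℂ) (hmod : star ζ * ζ = 1) (x : Fin n → ℂ)
    (h2 : (V - ζ • 1) *ᵥ ((V - ζ • 1) *ᵥ x) = 0) : (V - ζ • 1) *ᵥ x = 0 := by
  set y := (V - ζ • 1) *ᵥ x with hy_def
  have hy : V *ᵥ y = ζ • y := by
    have := h2
    rw [sub_mulVec, smul_mulVec, one_mulVec, sub_eq_zero] at this
    exact this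
  set P := Vᴴ * V with hP_def
  have hPH : Pᴴ = P := by
    rw [hP_def, conjTranspose_mul, conjTranspose_conjTranspose]
  have hP2 : P * P = P := by
    rw [hP_def, show Vᴴ * V * (Vᴴ * V) = Vᴴ * (V * Vᴴ * V) by noncomm_ring, hV]
  have ha : star y ⬝ᵥ (P *ᵥ y) = star y ⬝ᵥ y := by
    rw [hP_def, ← mulVec_mulVec, ← aux_adj, hy]
    rw [star_smul, smul_dotProduct, dotProduct_smul, smul_eq_mul, smul_eq_mul, ← mul_assoc,
      hmod, one_mul]
  have hb : star (P *ᵥ y) ⬝ᵥ y = star y ⬝ᵥ y := by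
    rw [aux_adj, hPH, ha]
  have hc : star (P *ᵥ y) ⬝ᵥ (P *ᵥ y) = star y ⬝ᵥ y := by
    rw [aux_adj, hPH, mulVec_mulVec, hP2, ha]
  have hz : P *ᵥ y = y := by
    have h0 : star (y - P *ᵥ y) ⬝ᵥ (y - P *ᵥ y) = 0 := by
      simp only [star_sub, sub_dotProduct, dotProduct_sub, ha, hb, hc]
      ring
    have := dotProduct_star_self_eq_zero.mp h0
    rwa [sub_eq_zero, eq_comm] at this
  have hVH : Vᴴ *ᵥ y = star ζ • y := by
    have h1 : ζ • (Vᴴ *ᵥ y) = y := by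
      rw [← mulVec_smul, ← hy, mulVec_mulVec, ← hP_def, hz]
    calc Vᴴ *ᵥ y = (star ζ * ζ) • (Vᴴ *ᵥ y) := by rw [hmod, one_smul]
      _ = star ζ • (ζ • (Vᴴ *ᵥ y)) := mul_smul _ _ _
      _ = star ζ • y := by rw [h1]
  have hfinal : star y ⬝ᵥ y = 0 := by
    have e1 : star y ⬝ᵥ (V *ᵥ x) = ζ * (star y ⬝ᵥ x) := by
      have := aux_adj Vᴴ y x
      rw [conjTranspose_conjTranspose, hVH, star_smul, star_star, smul_dotProduct,
        smul_eq_mul] at this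
      exact this.symm
    calc star y ⬝ᵥ y = star y ⬝ᵥ ((V - ζ • 1) *ᵥ x) := by rw [← hy_def]
      _ = star y ⬝ᵥ (V *ᵥ x) - star y ⬝ᵥ (ζ • x) := by
          rw [sub_mulVec, smul_mulVec, one_mulVec, dotProduct_sub]
      _ = ζ * (star y ⬝ᵥ x) - ζ * (star y ⬝ᵥ x) := by
          rw [e1, dotProduct_smul, smul_eq_mul]
      _ = 0 := by ring
  exact dotProduct_star_self_eq_zero.mp hfinal

theorem partial_isometry_unimodular_eigenvalue_mult_eq {n : ℕ}
    (V : Matrix (Fin n) (Fin n) ℂ) (hV : IsPartialIsometry V)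
    (ζ : ℂ) (hζ : ζ ∈ spectrum ℂ V) (hmod : ‖ζ‖ = 1) :
    algMult V ζ = geoMult V ζ := by
  classical
  have hmod' : star ζ * ζ = 1 := by
    rw [Complex.star_def, mul_comm, Complex.mul_conj]
    norm_cast
    rw [Complex.normSq_eq_norm_sq, hmod]
    norm_num
  set φ : Module.End ℂ (Fin n → ℂ) := (V - ζ • 1).mulVecLin with hφ_def
  have hker : ∀ x, φ (φ x) = 0 → φ x = 0 := fun x h =>
    aux_key V hV ζ hmod' x h
  have hk : ∀ k : ℕ, LinearMap.ker (φ ^ k) ≤ LinearMap.ker φ := by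
    intro k
    induction k with
    | zero =>
      rw [pow_zero]
      intro x hx
      have : x = 0 := by simpa using hx
      simp [this]
    | succ k ih =>
      intro x hx
      have hx' : φ x ∈ LinearMap.ker (φ ^ k) := by
        rw [LinearMap.mem_ker] at hx ⊢
        rw [pow_succ, Module.End.mul_apply] at hx
        exact hx
      have : φ (φ x) = 0 := LinearMap.mem_ker.mp (ih hx')
      exact LinearMap.mem_ker.mpr (hker x this)
  have hmax : φ.maxGenEigenspace 0 = LinearMap.ker φ := by
    apply le_antisymm
    · rw [Module.End.maxGenEigenspace, Module.End.genEigenspace_top]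
      exact iSup_le fun k => by rw [Module.End.genEigenspace_zero_nat]; exact hk k
    · have h1 : LinearMap.ker φ = φ.genEigenspace 0 (1 : ℕ) := by
        rw [Module.End.genEigenspace_zero_nat, pow_one]
      rw [h1]
      exact (φ.genEigenspace 0).monotone le_top
  have hc1 : φ.charpoly = (V - ζ • 1).charpoly := by
    rw [← LinearMap.charpoly_toMatrix φ (Pi.basisFun ℂ (Fin n)), LinearMap.toMatrix_eq_toMatrix']
    congr 1
    rw [hφ_def, ← Matrix.toLin'_apply']
    exact LinearMap.toMatrix'_toLin' _
  have halg : algMult V ζ = Module.finrank ℂ (φ.maxGenEigenspace 0) := by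
    rw [algMult, Polynomial.rootMultiplicity_eq_natTrailingDegree,
      ← aux_charpoly_sub_smul_one, ← hc1, LinearMap.finrank_maxGenEigenspace_zero_eq]
  rw [halg, hmax]
  rfl
end

section
/- Let V be an n×n complex matrix that is a partial isometry, and let λ be a complex number with |λ| < 1. Then rank(V − λI) ≥ rank(V); equivalently, the nullity of V is at least the nullity of V − λI. -/
open Matrix

def MatSimilar {n : Type*} [Fintype n] [DecidableEq n] (A B : Matrix n n ℂ) : Prop :=
  ∃ S : Matrix n n ℂ, IsUnit S ∧ A = S * B * S⁻¹

open scoped ComplexOrder in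
theorem partial_isometry_rank_le {n : ℕ}
    (V : Matrix (Fin n) (Fin n) ℂ) (hV : IsPartialIsometry V)
    (lam : ℂ) (hlam : ‖lam‖ < 1) :
    V.rank ≤ (V - lam • 1).rank ∧ nullity (V - lam • 1) ≤ nullity V := by
  have key : nullity (V - lam • 1) ≤ nullity V := by
    set K := LinearMap.ker (V - lam • 1).mulVecLin with hK
    set g : (Fin n → ℂ) →ₗ[ℂ] (Fin n → ℂ) :=
      ((1 : Matrix (Fin n) (Fin n) ℂ) - Vᴴ * V).mulVecLin with hg
    have hVx : ∀ x ∈ K, V *ᵥ x = lam • x := by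
      intro x hx
      have h1 : (V - lam • 1) *ᵥ x = 0 := hx
      have : V *ᵥ x - lam • x = 0 := by
        simpa [Matrix.sub_mulVec, Matrix.smul_mulVec, Matrix.one_mulVec] using h1
      exact sub_eq_zero.mp this
    have hmem : ∀ x ∈ K, g x ∈ LinearMap.ker V.mulVecLin := by
      intro x hx
      have : V *ᵥ ((1 - Vᴴ * V) *ᵥ x) = 0 := by
        rw [Matrix.mulVec_mulVec, Matrix.mul_sub, mul_one, ← mul_assoc, hV, sub_self,
          Matrix.zero_mulVec]
      exact this
    have hinj : ∀ x ∈ K, g x = 0 → x = 0 := by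
      intro x hx hgx
      have hfix : (Vᴴ * V) *ᵥ x = x := by
        have : x - (Vᴴ * V) *ᵥ x = 0 := by
          simpa [hg, Matrix.sub_mulVec, Matrix.one_mulVec] using hgx
        exact (sub_eq_zero.mp this).symm
      have hdot : star (V *ᵥ x) ⬝ᵥ (V *ᵥ x) = star x ⬝ᵥ x := by
        rw [Matrix.star_mulVec, Matrix.dotProduct_mulVec, Matrix.vecMul_vecMul,
          ← Matrix.dotProduct_mulVec, hfix]
      have hVxe := hVx x hx
      rw [hVxe] at hdot
      have hs : (starRingEnd ℂ lam * lam) * (star x ⬝ᵥ x) = star x ⬝ᵥ x := by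
        simpa [star_smul, smul_dotProduct, dotProduct_smul, mul_assoc,
          mul_comm, mul_left_comm, Complex.star_def] using hdot
      have hne : starRingEnd ℂ lam * lam ≠ 1 := by
        intro h
        have : Complex.normSq lam = 1 := by
          have := congrArg Complex.re h
          simpa [Complex.mul_conj', Complex.normSq] using this
        nlinarith [Complex.sq_norm lam, norm_nonneg lam]
      have hzero : star x ⬝ᵥ x = 0 := by
        by_contra hne'
        exact hne (mul_right_cancel₀ hne' (by linear_combination hs))
      exact dotProduct_star_self_eq_zero.mp hzero
    let h : K →ₗ[ℂ] LinearMap.ker V.mulVecLin :=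
      LinearMap.codRestrict _ (g.domRestrict K) (fun x => hmem x x.2)
    have hinj' : Function.Injective h := by
      intro a b hab
      have : g (a - b : K) = 0 := by
        have := congrArg (Subtype.val) hab
        simp only [h, LinearMap.codRestrict_apply, LinearMap.domRestrict_apply] at this
        simp only [Submodule.coe_sub, map_sub]
        exact sub_eq_zero.mpr this
      have := hinj _ (Submodule.sub_mem K a.2 b.2) this
      exact Subtype.ext (sub_eq_zero.mp this)
    exact LinearMap.finrank_le_finrank_of_injective hinj'
  refine ⟨?_, key⟩
  have h1 : V.rank + nullity V = n := by
    rw [Matrix.rank, nullity]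
    exact (LinearMap.finrank_range_add_finrank_ker _).trans (by simp)
  have h2 : (V - lam • 1).rank + nullity (V - lam • 1) = n := by
    rw [Matrix.rank, nullity]
    exact (LinearMap.finrank_range_add_finrank_ker _).trans (by simp)
  omega
end

section
/- Let n ≥ 2 and let ξ₁, ξ₂, …, ξ_{n−1} be complex numbers with |ξᵢ| < 1 for all i. Then there exists an n×n upper triangular complex matrix V such that: (a) V is a partial isometry; (b) the first column of V is zero; (c) the diagonal of V is (0, ξ₁, ξ₂, …, ξ_{n−1}); (d) every entry of V on the first superdiagonal (the entries V(i, i+1) for 1 ≤ i ≤ n−1) is nonzero. -/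
open Matrix

open Finset

noncomputable def xiN (m : ℕ) (ξ : Fin m → ℂ) : ℕ → ℂ :=
  fun k => if h : k - 1 < m ∧ k ≠ 0 then ξ ⟨k-1, h.1⟩ else 0

noncomputable def xN (m : ℕ) (ξ : Fin m → ℂ) : ℕ → ℝ :=
  fun k => Complex.normSq (xiN m ξ k)

noncomputable def dN (m : ℕ) (ξ : Fin m → ℂ) : ℕ → ℝ :=
  fun k => Real.sqrt (1 - xN m ξ k)

noncomputable def fN (m : ℕ) (ξ : Fin m → ℂ) : ℕ → ℕ → ℂ :=
  fun i j => if i = j then xiN m ξ j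
    else if i < j then ((dN m ξ i * dN m ξ j : ℝ) : ℂ) *
      ∏ k ∈ Finset.Ico (i+1) j, (-(starRingEnd ℂ) (xiN m ξ k)) else 0

lemma telescope (x : ℕ → ℝ) (a : ℕ) :
    ∑ i ∈ Finset.range a, (1 - x i) * ∏ k ∈ Finset.Ico (i+1) a, x k
      = 1 - ∏ k ∈ Finset.range a, x k := by
  induction a with
  | zero => simp
  | succ a ih =>
    rw [Finset.sum_range_succ, Finset.prod_range_succ]
    have h : ∀ i ∈ Finset.range a, (1 - x i) * ∏ k ∈ Finset.Ico (i+1) (a+1), x k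
        = ((1 - x i) * ∏ k ∈ Finset.Ico (i+1) a, x k) * x a := by
      intro i hi
      rw [Finset.prod_Ico_succ_top (by simp at hi; omega : i+1 ≤ a)]
      ring
    rw [Finset.sum_congr rfl h, ← Finset.sum_mul, ih]
    simp
    ring

section Main
variable {m : ℕ} (ξ : Fin m → ℂ)

lemma xiN_zero : xiN m ξ 0 = 0 := by simp [xiN]

lemma xN_zero : xN m ξ 0 = 0 := by simp [xN, xiN]

lemma normSq_lt (hξ : ∀ i, ‖ξ i‖ < 1) (k : ℕ) : xN m ξ k < 1 := by
  unfold xN xiN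
  split
  next h =>
    rw [Complex.normSq_eq_norm_sq]
    have h2 := hξ ⟨k-1, h.1⟩
    nlinarith [norm_nonneg (ξ ⟨k-1, h.1⟩)]
  next => simp

lemma dN_sq (hξ : ∀ i, ‖ξ i‖ < 1) (k : ℕ) :
    (dN m ξ k)^2 = 1 - xN m ξ k := by
  rw [dN, Real.sq_sqrt]
  linarith [normSq_lt ξ hξ k]

lemma dN_pos (hξ : ∀ i, ‖ξ i‖ < 1) (k : ℕ) : 0 < dN m ξ k :=
  Real.sqrt_pos.2 (by linarith [normSq_lt ξ hξ k])

lemma fN_zero_of_gt {i j : ℕ} (h : j < i) : fN m ξ i j = 0 := by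
  rw [fN]; rw [if_neg (by omega), if_neg (by omega)]

lemma key (hξ : ∀ i, ‖ξ i‖ < 1) {a b : ℕ} (hab : a ≤ b) :
    ∑ i ∈ Finset.range (a+1), (starRingEnd ℂ) (fN m ξ i a) * fN m ξ i b
      = if a = b then (if a = 0 then 0 else 1) else 0 := by
  have hsum : ∀ c : ℕ, 1 ≤ c → ∑ i ∈ Finset.range c,
      (dN m ξ i)^2 * ∏ k ∈ Finset.Ico (i+1) c, xN m ξ k = 1 := by
    intro c hc
    have h1 : ∀ i ∈ Finset.range c, (dN m ξ i)^2 * ∏ k ∈ Finset.Ico (i+1) c, xN m ξ k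
        = (1 - xN m ξ i) * ∏ k ∈ Finset.Ico (i+1) c, xN m ξ k := by
      intro i _
      rw [dN_sq ξ hξ i]
    rw [Finset.sum_congr rfl h1, telescope]
    rw [Finset.prod_eq_zero (Finset.mem_range.2 (by omega : 0 < c)) (xN_zero ξ)]
    ring
  rw [Finset.sum_range_succ]
  have hfaa : fN m ξ a a = xiN m ξ a := by simp [fN]
  by_cases ha0 : a = 0
  · subst ha0
    simp only [Finset.range_zero, Finset.sum_empty, zero_add, hfaa, xiN_zero]
    simp
  · have h1a : 1 ≤ a := by omega
    rcases eq_or_lt_of_le hab with rfl | hlt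
    · -- diagonal case
      rw [if_pos rfl, if_neg ha0]
      have h2 : ∀ i ∈ Finset.range a, (starRingEnd ℂ) (fN m ξ i a) * fN m ξ i a
          = (((dN m ξ i)^2 * ∏ k ∈ Finset.Ico (i+1) a, xN m ξ k : ℝ) : ℂ)
            * (((dN m ξ a)^2 : ℝ) : ℂ) := by
        intro i hi
        have hia : i < a := Finset.mem_range.1 hi
        rw [fN]
        rw [if_neg (by omega), if_pos hia]
        rw [_root_.map_mul, map_prod, Complex.conj_ofReal]
        simp only [map_neg, Complex.conj_conj]
        have hprod : (∏ k ∈ Finset.Ico (i+1) a, -(xiN m ξ k)) *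
            (∏ k ∈ Finset.Ico (i+1) a, -(starRingEnd ℂ) (xiN m ξ k))
            = ∏ k ∈ Finset.Ico (i+1) a, ((xN m ξ k : ℝ) : ℂ) := by
          rw [← Finset.prod_mul_distrib]
          refine Finset.prod_congr rfl fun k _ => ?_
          rw [neg_mul_neg, Complex.mul_conj]
          rfl
        push_cast
        push_cast at hprod
        linear_combination (↑(dN m ξ i) * ↑(dN m ξ a) * ↑(dN m ξ i) * ↑(dN m ξ a) : ℂ) * hprod
      rw [Finset.sum_congr rfl h2, ← Finset.sum_mul, hfaa]
      have hs : (∑ i ∈ Finset.range a,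
          (((dN m ξ i)^2 * ∏ k ∈ Finset.Ico (i+1) a, xN m ξ k : ℝ) : ℂ)) = ((1:ℝ) : ℂ) := by
        rw [← Complex.ofReal_sum, hsum a h1a]
      rw [hs, mul_comm ((starRingEnd ℂ) (xiN m ξ a)), Complex.mul_conj]
      have hd := dN_sq ξ hξ a
      have : Complex.normSq (xiN m ξ a) = xN m ξ a := rfl
      rw [this]
      push_cast
      rw [show ((dN m ξ a : ℂ))^2 = ((1 - xN m ξ a : ℝ) : ℂ) by push_cast [← hd]; ring]
      push_cast
      ring
    · -- off-diagonal case a < b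
      rw [if_neg (by omega)]
      set Q := ∏ k ∈ Finset.Ico (a+1) b, (-(starRingEnd ℂ) (xiN m ξ k)) with hQ
      have h3 : ∀ i ∈ Finset.range a, (starRingEnd ℂ) (fN m ξ i a) * fN m ξ i b
          = (((dN m ξ i)^2 * ∏ k ∈ Finset.Ico (i+1) a, xN m ξ k : ℝ) : ℂ)
            * ((dN m ξ a : ℂ) * (dN m ξ b : ℂ) * (-(starRingEnd ℂ) (xiN m ξ a)) * Q) := by
        intro i hi
        have hia : i < a := Finset.mem_range.1 hi
        have hfia : fN m ξ i a = ((dN m ξ i * dN m ξ a : ℝ) : ℂ) *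
            ∏ k ∈ Finset.Ico (i+1) a, (-(starRingEnd ℂ) (xiN m ξ k)) := by
          rw [fN]; rw [if_neg (by omega), if_pos hia]
        have hfib : fN m ξ i b = ((dN m ξ i * dN m ξ b : ℝ) : ℂ) *
            ∏ k ∈ Finset.Ico (i+1) b, (-(starRingEnd ℂ) (xiN m ξ k)) := by
          rw [fN]; rw [if_neg (by omega), if_pos (by omega)]
        rw [hfia, hfib]
        rw [_root_.map_mul, map_prod, Complex.conj_ofReal]
        simp only [map_neg, Complex.conj_conj]
        rw [← Finset.prod_Ico_consecutive _ (by omega : i+1 ≤ a) (le_of_lt hlt)]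
        rw [← Finset.prod_Ico_consecutive _ (by omega : a ≤ a+1) (by omega : a+1 ≤ b)]
        rw [show Finset.Ico a (a+1) = {a} by simp,
          Finset.prod_singleton]
        have hprod : (∏ k ∈ Finset.Ico (i+1) a, -(xiN m ξ k)) *
            (∏ k ∈ Finset.Ico (i+1) a, -(starRingEnd ℂ) (xiN m ξ k))
            = ∏ k ∈ Finset.Ico (i+1) a, ((xN m ξ k : ℝ) : ℂ) := by
          rw [← Finset.prod_mul_distrib]
          refine Finset.prod_congr rfl fun k _ => ?_
          rw [neg_mul_neg, Complex.mul_conj]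
          rfl
        push_cast
        push_cast at hprod
        linear_combination (↑(dN m ξ i) * ↑(dN m ξ a) * ↑(dN m ξ i) * ↑(dN m ξ b)
          * (-(starRingEnd ℂ) (xiN m ξ a)) * Q : ℂ) * hprod
      rw [Finset.sum_congr rfl h3, ← Finset.sum_mul, hfaa]
      have hs : (∑ i ∈ Finset.range a,
          (((dN m ξ i)^2 * ∏ k ∈ Finset.Ico (i+1) a, xN m ξ k : ℝ) : ℂ)) = ((1:ℝ) : ℂ) := by
        rw [← Complex.ofReal_sum, hsum a h1a]
      rw [hs, fN, if_neg (by omega), if_pos hlt, ← hQ]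
      push_cast
      ring

lemma keyLe (hξ : ∀ i, ‖ξ i‖ < 1) {a b N : ℕ} (hab : a ≤ b) (ha : a < N) :
    ∑ i ∈ Finset.range N, (starRingEnd ℂ) (fN m ξ i a) * fN m ξ i b
      = if a = b then (if a = 0 then 0 else 1) else 0 := by
  rw [← Finset.sum_subset (Finset.range_subset_range.2 (show a+1 ≤ N from ha))
    (fun i _ hi => by
      have : a < i := by simp only [Finset.mem_range] at hi ⊢; omega
      rw [fN_zero_of_gt ξ this, map_zero, zero_mul])]
  exact key ξ hξ hab

lemma key' (hξ : ∀ i, ‖ξ i‖ < 1) {a b N : ℕ} (ha : a < N) (hb : b < N) :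
    ∑ i ∈ Finset.range N, (starRingEnd ℂ) (fN m ξ i a) * fN m ξ i b
      = if a = b then (if a = 0 then 0 else 1) else 0 := by
  rcases le_or_gt a b with h | h
  · exact keyLe ξ hξ h ha
  · have hswap : ∑ i ∈ Finset.range N, (starRingEnd ℂ) (fN m ξ i a) * fN m ξ i b
        = (starRingEnd ℂ) (∑ i ∈ Finset.range N, (starRingEnd ℂ) (fN m ξ i b) * fN m ξ i a) := by
      rw [map_sum]
      refine Finset.sum_congr rfl fun i _ => ?_
      rw [_root_.map_mul, Complex.conj_conj]
      ring
    rw [hswap, keyLe ξ hξ (le_of_lt h) hb, if_neg (by omega), map_zero,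
      if_neg (by omega)]

end Main

theorem exists_upper_triangular_partial_isometry {m : ℕ} (hm : 1 ≤ m)
    (ξ : Fin m → ℂ) (hξ : ∀ i, ‖ξ i‖ < 1) :
    ∃ V : Matrix (Fin (m + 1)) (Fin (m + 1)) ℂ,
      IsPartialIsometry V ∧
      (∀ i j : Fin (m + 1), (j : ℕ) < (i : ℕ) → V i j = 0) ∧
      (∀ i, V i 0 = 0) ∧
      V 0 0 = 0 ∧
      (∀ i : Fin m, V i.succ i.succ = ξ i) ∧
      (∀ i : Fin m, V i.castSucc i.succ ≠ 0) := by
  refine ⟨Matrix.of fun i j : Fin (m+1) => fN m ξ (i : ℕ) (j : ℕ), ?_, ?_, ?_, ?_, ?_, ?_⟩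
  · -- partial isometry
    set V : Matrix (Fin (m+1)) (Fin (m+1)) ℂ :=
      Matrix.of fun i j : Fin (m+1) => fN m ξ (i : ℕ) (j : ℕ) with hV
    have hcol0 : ∀ i : Fin (m+1), V i 0 = 0 := by
      intro i
      show fN m ξ (i : ℕ) ((0 : Fin (m+1)) : ℕ) = 0
      rcases Nat.eq_zero_or_pos (i : ℕ) with h | h
      · simp only [Fin.val_zero]
        rw [fN, h, if_pos rfl, xiN_zero]
      · simp only [Fin.val_zero]
        exact fN_zero_of_gt ξ h
    have hD : Vᴴ * V = Matrix.diagonal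
        (fun j : Fin (m+1) => if (j : ℕ) = 0 then (0:ℂ) else 1) := by
      ext a b
      rw [Matrix.mul_apply]
      simp only [conjTranspose_apply, hV, Matrix.of_apply, RCLike.star_def]
      rw [Fin.sum_univ_eq_sum_range
        (fun i => (starRingEnd ℂ) (fN m ξ i (a : ℕ)) * fN m ξ i (b : ℕ)) (m+1)]
      rw [key' ξ hξ a.isLt b.isLt]
      rw [Matrix.diagonal_apply]
      by_cases hab : a = b
      · subst hab
        rw [if_pos rfl, if_pos rfl]
      · rw [if_neg (fun h => hab (Fin.ext h)), if_neg hab]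
    show V * Vᴴ * V = V
    rw [mul_assoc, hD]
    ext i j
    rw [Matrix.mul_diagonal]
    by_cases hj : (j : ℕ) = 0
    · rw [if_pos hj, mul_zero]
      have : j = 0 := Fin.ext hj
      rw [this] at *
      exact (hcol0 i).symm
    · rw [if_neg hj, mul_one]
  · intro i j h
    exact fN_zero_of_gt ξ h
  · intro i
    show fN m ξ (i : ℕ) ((0 : Fin (m+1)) : ℕ) = 0
    rcases Nat.eq_zero_or_pos (i : ℕ) with h | h
    · simp only [Fin.val_zero]
      rw [fN, h, if_pos rfl, xiN_zero]
    · simp only [Fin.val_zero]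
      exact fN_zero_of_gt ξ h
  · show fN m ξ ((0 : Fin (m+1)) : ℕ) ((0 : Fin (m+1)) : ℕ) = 0
    simp only [Fin.val_zero]
    rw [fN, if_pos rfl, xiN_zero]
  · intro i
    show fN m ξ (i.succ : ℕ) (i.succ : ℕ) = ξ i
    rw [fN, if_pos rfl, Fin.val_succ, xiN]
    rw [dif_pos ⟨by omega, by omega⟩]
    congr 1
  · intro i
    show fN m ξ (i.castSucc : ℕ) (i.succ : ℕ) ≠ 0
    rw [Fin.coe_castSucc, Fin.val_succ, fN, if_neg (by omega), if_pos (by omega),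
      Finset.Ico_self, Finset.prod_empty, mul_one]
    have h1 := dN_pos ξ hξ (i : ℕ)
    have h2 := dN_pos ξ hξ ((i : ℕ)+1)
    simp only [ne_eq, Complex.ofReal_eq_zero]
    positivity
end

section
/- Let A be an m×m complex matrix and B an k×k complex matrix such that A and B have no common eigenvalue, and let C be any m×k complex matrix. Then the block upper triangular matrix with diagonal blocks A, B and upper-right block C is similar to the block diagonal matrix A ⊕ B; that is, fromBlocks A C 0 B is similar to fromBlocks A 0 0 B. -/
open Matrix Polynomial

lemma eval_charpoly' {n : ℕ} (M : Matrix (Fin n) (Fin n) ℂ) (μ : ℂ) :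
    M.charpoly.eval μ = (Matrix.scalar (Fin n) μ - M).det := by
  rw [Matrix.charpoly, eval_det, matPolyEquiv_charmatrix]
  simp

lemma mem_spectrum_iff_isRoot {n : ℕ} (M : Matrix (Fin n) (Fin n) ℂ) (μ : ℂ) :
    μ ∈ spectrum ℂ M ↔ M.charpoly.IsRoot μ := by
  have halg : algebraMap ℂ (Matrix (Fin n) (Fin n) ℂ) μ = Matrix.scalar (Fin n) μ := rfl
  rw [spectrum.mem_iff, Polynomial.IsRoot, eval_charpoly', halg,
    Matrix.isUnit_iff_isUnit_det, isUnit_iff_ne_zero, not_not]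

lemma aeval_comm {m k : ℕ} (A : Matrix (Fin m) (Fin m) ℂ) (B : Matrix (Fin k) (Fin k) ℂ)
    (X : Matrix (Fin m) (Fin k) ℂ) (hX : A * X = X * B) (p : ℂ[X]) :
    (aeval A p) * X = X * (aeval B p) := by
  induction p using Polynomial.induction_on with
  | C c => simp [Algebra.algebraMap_eq_smul_one, Matrix.smul_mul, Matrix.mul_smul]
  | add p q hp hq => simp only [map_add, Matrix.add_mul, Matrix.mul_add, hp, hq]
  | monomial n c ih =>
    simp only [_root_.map_mul, map_pow, aeval_X, aeval_C] at *
    rw [pow_succ, pow_succ, ← Matrix.mul_assoc, Matrix.mul_assoc _ A X, hX,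
      ← Matrix.mul_assoc, ih, Matrix.mul_assoc, Matrix.mul_assoc]

lemma isUnit_list_prod {M : Type*} [Monoid M] (l : List M)
    (h : ∀ x ∈ l, IsUnit x) : IsUnit l.prod := by
  induction l with
  | nil => simp
  | cons a t ih =>
    rw [List.prod_cons]
    exact (h a List.mem_cons_self).mul (ih fun x hx => h x (List.mem_cons_of_mem a hx))

lemma sylvester_surj {m k : ℕ} (A : Matrix (Fin m) (Fin m) ℂ) (B : Matrix (Fin k) (Fin k) ℂ)
    (h : ∀ μ : ℂ, ¬(μ ∈ spectrum ℂ A ∧ μ ∈ spectrum ℂ B))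
    (C : Matrix (Fin m) (Fin k) ℂ) :
    ∃ X : Matrix (Fin m) (Fin k) ℂ, X * B - A * X = C := by
  set L : Matrix (Fin m) (Fin k) ℂ →ₗ[ℂ] Matrix (Fin m) (Fin k) ℂ :=
    { toFun := fun X => X * B - A * X
      map_add' := fun X Y => by rw [Matrix.add_mul, Matrix.mul_add]; abel
      map_smul' := fun c X => by simp [Matrix.smul_mul, Matrix.mul_smul, smul_sub] }
  have hinj : Function.Injective L := by
    rw [← LinearMap.ker_eq_bot, LinearMap.ker_eq_bot']
    intro X hX
    have hX0 : X * B - A * X = 0 := hX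
    have hX' : A * X = X * B := by
      have := sub_eq_zero.mp hX0
      exact this.symm
    have hcomm := aeval_comm A B X hX' B.charpoly
    rw [Matrix.aeval_self_charpoly, Matrix.mul_zero] at hcomm
    set l : List ℂ := B.charpoly.roots.toList with hl
    have hsplit : B.charpoly = ((l.map fun r => Polynomial.X - Polynomial.C r)).prod := by
      conv_lhs => rw [Polynomial.Splits.eq_prod_roots_of_monic (IsAlgClosed.splits _)
        B.charpoly_monic]
      rw [← Multiset.prod_coe, ← Multiset.map_coe, hl, Multiset.coe_toList]
    have hunit : IsUnit (aeval A B.charpoly) := by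
      rw [hsplit]
      have := map_list_prod ((aeval A).toRingHom : ℂ[X] →+* Matrix (Fin m) (Fin m) ℂ)
        (l.map fun r => Polynomial.X - Polynomial.C r)
      simp only [AlgHom.toRingHom_eq_coe, RingHom.coe_coe] at this
      rw [this, List.map_map]
      apply isUnit_list_prod
      intro x hx
      simp only [List.mem_map] at hx
      obtain ⟨r, hr, rfl⟩ := hx
      have hrroot : B.charpoly.IsRoot r := by
        have : r ∈ B.charpoly.roots := by rwa [← Multiset.mem_toList]
        exact (Polynomial.mem_roots'.mp this).2
      have hrB : r ∈ spectrum ℂ B := (mem_spectrum_iff_isRoot B r).mpr hrroot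
      have hrA : r ∉ spectrum ℂ A := fun hc => h r ⟨hc, hrB⟩
      rw [spectrum.mem_iff, not_not] at hrA
      have : (fun p => aeval A p) (Polynomial.X - Polynomial.C r)
          = -(algebraMap ℂ (Matrix (Fin m) (Fin m) ℂ) r - A) := by
        simp [map_sub]
      simpa [Function.comp, map_sub] using hrA.neg
    obtain ⟨u, hu⟩ := hunit
    have : X = 0 := by
      calc X = (↑u⁻¹ : Matrix (Fin m) (Fin m) ℂ) * ((↑u : Matrix (Fin m) (Fin m) ℂ) * X) := by
            rw [← Matrix.mul_assoc, Units.inv_mul, Matrix.one_mul]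
      _ = 0 := by rw [hu, hcomm, Matrix.mul_zero]
    exact this
  have hsurj := LinearMap.injective_iff_surjective.mp hinj
  exact hsurj C

theorem block_triangular_similar_block_diagonal {m k : ℕ}
    (A : Matrix (Fin m) (Fin m) ℂ) (B : Matrix (Fin k) (Fin k) ℂ)
    (h : ∀ μ : ℂ, ¬(μ ∈ spectrum ℂ A ∧ μ ∈ spectrum ℂ B))
    (C : Matrix (Fin m) (Fin k) ℂ) :
    MatSimilar (Matrix.fromBlocks A C 0 B) (Matrix.fromBlocks A 0 0 B) := by
  obtain ⟨X, hX⟩ := sylvester_surj A B h C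
  set S : Matrix (Fin m ⊕ Fin k) (Fin m ⊕ Fin k) ℂ := Matrix.fromBlocks 1 X 0 1 with hS
  have hdet : S.det = 1 := by
    rw [hS, Matrix.det_fromBlocks_zero₂₁]; simp
  have hSunit : IsUnit S := by
    rw [Matrix.isUnit_iff_isUnit_det, hdet]; exact isUnit_one
  refine ⟨S, hSunit, ?_⟩
  have hmul : (Matrix.fromBlocks A C 0 B) * S = S * Matrix.fromBlocks A 0 0 B := by
    rw [hS, Matrix.fromBlocks_multiply, Matrix.fromBlocks_multiply]
    simp only [Matrix.mul_one, Matrix.one_mul, Matrix.mul_zero, Matrix.zero_mul,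
      add_zero, zero_add]
    have hAC : A * X + C = X * B := by rw [← hX]; abel
    rw [hAC]
  have hSS : S * S⁻¹ = 1 := Matrix.mul_nonsing_inv S (by rw [hdet]; exact isUnit_one)
  calc Matrix.fromBlocks A C 0 B
      = (Matrix.fromBlocks A C 0 B) * (S * S⁻¹) := by rw [hSS, Matrix.mul_one]
    _ = ((Matrix.fromBlocks A C 0 B) * S) * S⁻¹ := by rw [Matrix.mul_assoc]
    _ = S * Matrix.fromBlocks A 0 0 B * S⁻¹ := by rw [hmul]
end

section
/- Let p be a monic complex polynomial of degree n ≥ 2 such that every root of p lies in the closed unit disk and p(0) = 0. Then there exists an n×n complex matrix V that is a partial isometry and whose characteristic polynomial equals p. -/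
open Matrix

noncomputable def pisoD (lam : ℕ → ℂ) (k : ℕ) : ℝ := Real.sqrt (1 - Complex.normSq (lam k))

noncomputable def pisoQ (lam : ℕ → ℂ) (a b : ℕ) : ℂ :=
  ∏ k ∈ Finset.Ioo a b, (-(starRingEnd ℂ) (lam k))

noncomputable def pisoF (lam : ℕ → ℂ) (a b : ℕ) : ℂ :=
  if a = b then lam a
  else if a < b then ((pisoD lam a * pisoD lam b : ℝ) : ℂ) * pisoQ lam a b else 0

lemma piso_tele (g : ℕ → ℝ) (a nn : ℕ) :
    ∑ j ∈ Finset.Ioo a nn, ((1 - g j) * ∏ k ∈ Finset.Ioo a j, g k)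
      = 1 - ∏ k ∈ Finset.Ioo a nn, g k := by
  rcases le_or_gt nn (a + 1) with h | h
  · have he : Finset.Ioo a nn = ∅ := by ext k; simp only [Finset.mem_Ioo, Finset.notMem_empty, iff_false]; omega
    rw [he]; simp
  · have hIoo : Finset.Ioo a nn = Finset.Ico (a + 1) nn := by
      ext k; simp only [Finset.mem_Ioo, Finset.mem_Ico]; omega
    rw [hIoo, Finset.sum_Ico_eq_sum_range]
    have key : ∀ t, (1 - g (a + 1 + t)) * ∏ k ∈ Finset.Ioo a (a + 1 + t), g k
        = (∏ k ∈ Finset.Ioo a (a + 1 + t), g k) - ∏ k ∈ Finset.Ioo a (a + 1 + (t + 1)), g k := by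
      intro t
      have hins : Finset.Ioo a (a + 1 + (t + 1)) = insert (a + 1 + t) (Finset.Ioo a (a + 1 + t)) := by
        ext k; simp only [Finset.mem_Ioo, Finset.mem_insert]; omega
      rw [hins, Finset.prod_insert (by simp)]
      ring
    calc ∑ t ∈ Finset.range (nn - (a + 1)),
          ((1 - g (a + 1 + t)) * ∏ k ∈ Finset.Ioo a (a + 1 + t), g k)
        = ∑ t ∈ Finset.range (nn - (a + 1)),
          ((∏ k ∈ Finset.Ioo a (a + 1 + t), g k) - ∏ k ∈ Finset.Ioo a (a + 1 + (t + 1)), g k) := by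
          exact Finset.sum_congr rfl fun t _ => key t
      _ = (∏ k ∈ Finset.Ioo a (a + 1 + 0), g k)
          - ∏ k ∈ Finset.Ioo a (a + 1 + (nn - (a + 1))), g k := by
          exact Finset.sum_range_sub' (fun t => ∏ k ∈ Finset.Ioo a (a + 1 + t), g k) _
      _ = 1 - ∏ k ∈ Finset.Ioo a nn, g k := by
          rw [show a + 1 + (nn - (a + 1)) = nn by omega,
            show Finset.Ioo a (a + 1) = ∅ by ext k; simp only [Finset.mem_Ioo, Finset.notMem_empty, iff_false]; omega]
          simp

lemma pisoQ_mul_conj (lam : ℕ → ℂ) (b j : ℕ) :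
    pisoQ lam b j * (starRingEnd ℂ) (pisoQ lam b j)
      = ((∏ k ∈ Finset.Ioo b j, Complex.normSq (lam k) : ℝ) : ℂ) := by
  rw [Complex.mul_conj, pisoQ, map_prod Complex.normSq]
  push_cast
  refine Finset.prod_congr rfl fun k _ => ?_
  simp [Complex.normSq_conj]

lemma pisoF_last (m : ℕ) (lam : ℕ → ℂ) (hm : lam m = 0) (j : ℕ) (hj : j ≤ m) :
    pisoF lam m j = 0 := by
  rw [pisoF]
  rcases eq_or_lt_of_le hj with h | h
  · rw [h]; simp [hm]
  · rw [if_neg (by omega), if_neg (by omega)]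

lemma pisoD_sq (lam : ℕ → ℂ) (hlam : ∀ k, Complex.normSq (lam k) ≤ 1) (k : ℕ) :
    (pisoD lam k) ^ 2 = 1 - Complex.normSq (lam k) :=
  Real.sq_sqrt (by linarith [hlam k])

lemma pisoQ_split (lam : ℕ → ℂ) {a b j : ℕ} (hab : a < b) (hbj : b < j) :
    pisoQ lam a j = pisoQ lam a b * (-(starRingEnd ℂ) (lam b)) * pisoQ lam b j := by
  have h1 : Finset.Ioo a j = Finset.Ioo a b ∪ Finset.Ico b j := by
    ext k; simp only [Finset.mem_Ioo, Finset.mem_union, Finset.mem_Ico]; omega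
  have h2 : Finset.Ico b j = insert b (Finset.Ioo b j) := (Finset.Ioo_insert_left hbj).symm
  have hd : Disjoint (Finset.Ioo a b) (Finset.Ico b j) := by
    rw [Finset.disjoint_left]
    intro k hk hk'
    simp only [Finset.mem_Ioo, Finset.mem_Ico] at hk hk'
    omega
  rw [pisoQ, pisoQ, pisoQ, h1, Finset.prod_union hd, h2, Finset.prod_insert (by simp)]
  ring

lemma piso_prod_zero (m : ℕ) (lam : ℕ → ℂ) (hm : lam m = 0) {a : ℕ} (ha : a < m) :
    ∏ k ∈ Finset.Ioo a (m + 1), Complex.normSq (lam k) = 0 :=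
  Finset.prod_eq_zero (Finset.mem_Ioo.mpr ⟨ha, by omega⟩) (by rw [hm]; simp)

lemma piso_row_le (m : ℕ) (lam : ℕ → ℂ) (hlam : ∀ k, Complex.normSq (lam k) ≤ 1)
    (hm : lam m = 0) (a b : ℕ) (hab : a ≤ b) (hb : b ≤ m) :
    ∑ j ∈ Finset.range (m + 1), pisoF lam a j * (starRingEnd ℂ) (pisoF lam b j)
      = if a = b ∧ a ≠ m then 1 else 0 := by
  rcases eq_or_lt_of_le hb with hbm | hbm
  · -- b = m : row b is identically zero on range (m+1)
    subst hbm
    rw [Finset.sum_eq_zero, if_neg (by omega)]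
    intro j hj
    rw [pisoF_last b lam hm j (by simp at hj; omega)]
    simp
  · -- b < m
    have hsplit : Finset.range (m + 1) = Finset.Ico 0 (b + 1) ∪ Finset.Ico (b + 1) (m + 1) := by
      rw [Finset.range_eq_Ico, Finset.Ico_union_Ico_eq_Ico (by omega) (by omega)]
    have hdisj : Disjoint (Finset.Ico 0 (b + 1)) (Finset.Ico (b + 1) (m + 1)) := by
      rw [Finset.disjoint_left]
      intro k hk hk'
      simp only [Finset.mem_Ico] at hk hk'
      omega
    have hIoo : Finset.Ico (b + 1) (m + 1) = Finset.Ioo b (m + 1) := by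
      ext k; simp only [Finset.mem_Ico, Finset.mem_Ioo]; omega
    rw [hsplit, Finset.sum_union hdisj, hIoo]
    rcases eq_or_lt_of_le hab with hab' | hab'
    · -- a = b < m : norm of row a equals 1
      subst hab'
      have h1 : ∑ j ∈ Finset.Ico 0 (a + 1), pisoF lam a j * (starRingEnd ℂ) (pisoF lam a j)
          = ((Complex.normSq (lam a) : ℝ) : ℂ) := by
        rw [Finset.sum_eq_single_of_mem a (by simp)]
        · rw [pisoF, if_pos rfl, Complex.mul_conj]
        · intro j hj hne
          rw [pisoF, if_neg (fun h => hne h.symm), if_neg (by simp at hj; omega)]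
          simp
      have h2 : ∑ j ∈ Finset.Ioo a (m + 1), pisoF lam a j * (starRingEnd ℂ) (pisoF lam a j)
          = ((1 - Complex.normSq (lam a) : ℝ) : ℂ) := by
        have hterm : ∀ j ∈ Finset.Ioo a (m + 1),
            pisoF lam a j * (starRingEnd ℂ) (pisoF lam a j)
            = (((pisoD lam a) ^ 2 * ((1 - Complex.normSq (lam j)) *
                ∏ k ∈ Finset.Ioo a j, Complex.normSq (lam k)) : ℝ) : ℂ) := by
          intro j hj
          simp only [Finset.mem_Ioo] at hj
          rw [pisoF, if_neg (by omega), if_pos hj.1]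
          rw [_root_.map_mul, Complex.conj_ofReal]
          have : ((pisoD lam a * pisoD lam j : ℝ) : ℂ) * pisoQ lam a j *
              (((pisoD lam a * pisoD lam j : ℝ) : ℂ) * (starRingEnd ℂ) (pisoQ lam a j))
              = ((pisoD lam a * pisoD lam j : ℝ) : ℂ) ^ 2 *
                (pisoQ lam a j * (starRingEnd ℂ) (pisoQ lam a j)) := by ring
          rw [this, pisoQ_mul_conj]
          rw [← pisoD_sq lam hlam j]
          push_cast
          ring
        rw [Finset.sum_congr rfl hterm, ← Complex.ofReal_sum, ← Finset.mul_sum,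
          piso_tele (fun k => Complex.normSq (lam k)) a (m + 1),
          piso_prod_zero m lam hm hbm, pisoD_sq lam hlam a]
        norm_num
      rw [h1, h2, if_pos ⟨rfl, by omega⟩]
      push_cast
      ring
    · -- a < b < m : orthogonality
      have h1 : ∑ j ∈ Finset.Ico 0 (b + 1), pisoF lam a j * (starRingEnd ℂ) (pisoF lam b j)
          = ((pisoD lam a * pisoD lam b : ℝ) : ℂ) * pisoQ lam a b * (starRingEnd ℂ) (lam b) := by
        rw [Finset.sum_eq_single_of_mem b (by simp)]
        · rw [pisoF, if_neg (by omega), if_pos hab', pisoF, if_pos rfl]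
        · intro j hj hne
          have hz : pisoF lam b j = 0 := by
            rw [pisoF, if_neg (fun h => hne h.symm), if_neg (by simp at hj; omega)]
          rw [hz]
          simp
      have h2 : ∑ j ∈ Finset.Ioo b (m + 1), pisoF lam a j * (starRingEnd ℂ) (pisoF lam b j)
          = -(((pisoD lam a * pisoD lam b : ℝ) : ℂ) * pisoQ lam a b * (starRingEnd ℂ) (lam b)) := by
        have hterm : ∀ j ∈ Finset.Ioo b (m + 1),
            pisoF lam a j * (starRingEnd ℂ) (pisoF lam b j)
            = -(((pisoD lam a * pisoD lam b : ℝ) : ℂ) * pisoQ lam a b * (starRingEnd ℂ) (lam b))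
              * (((1 - Complex.normSq (lam j)) *
                  ∏ k ∈ Finset.Ioo b j, Complex.normSq (lam k) : ℝ) : ℂ) := by
          intro j hj
          simp only [Finset.mem_Ioo] at hj
          rw [pisoF, if_neg (by omega), if_pos (by omega), pisoF, if_neg (by omega),
            if_pos hj.1, _root_.map_mul, Complex.conj_ofReal, pisoQ_split lam hab' hj.1]
          have : ((pisoD lam a * pisoD lam j : ℝ) : ℂ) *
              (pisoQ lam a b * (-(starRingEnd ℂ) (lam b)) * pisoQ lam b j) *
              (((pisoD lam b * pisoD lam j : ℝ) : ℂ) * (starRingEnd ℂ) (pisoQ lam b j))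
              = -(((pisoD lam a * pisoD lam b : ℝ) : ℂ) * pisoQ lam a b * (starRingEnd ℂ) (lam b))
                * (((pisoD lam j : ℝ) : ℂ) ^ 2 *
                   (pisoQ lam b j * (starRingEnd ℂ) (pisoQ lam b j))) := by
            push_cast
            ring
          rw [this, pisoQ_mul_conj, ← pisoD_sq lam hlam j]
          push_cast
          ring
        rw [Finset.sum_congr rfl hterm, ← Finset.mul_sum, ← Complex.ofReal_sum,
          piso_tele (fun k => Complex.normSq (lam k)) b (m + 1),
          piso_prod_zero m lam hm hbm]
        norm_num
      rw [h1, h2, if_neg (by omega)]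
      ring

lemma piso_row (m : ℕ) (lam : ℕ → ℂ) (hlam : ∀ k, Complex.normSq (lam k) ≤ 1)
    (hm : lam m = 0) (a b : ℕ) (ha : a ≤ m) (hb : b ≤ m) :
    ∑ j ∈ Finset.range (m + 1), pisoF lam a j * (starRingEnd ℂ) (pisoF lam b j)
      = if a = b ∧ a ≠ m then 1 else 0 := by
  rcases le_or_gt a b with h | h
  · exact piso_row_le m lam hlam hm a b h hb
  · have := piso_row_le m lam hlam hm b a h.le ha
    have hc : ∑ j ∈ Finset.range (m + 1), pisoF lam a j * (starRingEnd ℂ) (pisoF lam b j)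
        = (starRingEnd ℂ) (∑ j ∈ Finset.range (m + 1),
            pisoF lam b j * (starRingEnd ℂ) (pisoF lam a j)) := by
      rw [map_sum]
      refine Finset.sum_congr rfl fun j _ => ?_
      rw [_root_.map_mul, Complex.conj_conj]
      ring
    rw [hc, this, if_neg (by omega), if_neg (by omega), map_zero]

lemma list_prod_getD {M : Type*} [CommMonoid M] (l : List ℂ) (g : ℂ → M) :
    ∏ k ∈ Finset.range l.length, g (l.getD k 0) = (l.map g).prod := by
  induction l with
  | nil => simp
  | cons a t ih =>
    rw [List.length_cons, Finset.prod_range_succ', List.map_cons, List.prod_cons]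
    simp only [List.getD_cons_succ, List.getD_cons_zero]
    rw [ih, mul_comm]

open Polynomial in
theorem exists_partial_isometry_with_charpoly (n : ℕ) (hn : 2 ≤ n)
    (p : Polynomial ℂ) (hmonic : p.Monic) (hdeg : p.natDegree = n)
    (hroots : ∀ z : ℂ, p.IsRoot z → ‖z‖ ≤ 1)
    (h0 : p.eval 0 = 0) :
    ∃ V : Matrix (Fin n) (Fin n) ℂ, IsPartialIsometry V ∧ V.charpoly = p := by
  classical
  have hp0 : p ≠ 0 := hmonic.ne_zero
  have hcard : Multiset.card p.roots = n := by
    rw [← hdeg]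
    exact (Polynomial.splits_iff_card_roots.mp (IsAlgClosed.splits p))
  have h0mem : (0 : ℂ) ∈ p.roots := by
    rw [Polynomial.mem_roots hp0]; exact h0
  set s : Multiset ℂ := p.roots.erase 0 with hs
  have hcons : (0 : ℂ) ::ₘ s = p.roots := Multiset.cons_erase h0mem
  set l : List ℂ := s.toList with hl
  have hslen : l.length = n - 1 := by
    rw [hl, Multiset.length_toList, hs, Multiset.card_erase_of_mem h0mem, hcard]
    rfl
  set lam : ℕ → ℂ := fun k => l.getD k 0 with hlam_def
  have hlamm : lam (n - 1) = 0 := List.getD_eq_default _ _ (by omega)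
  have hlmem : ∀ z ∈ l, ‖z‖ ≤ 1 := by
    intro z hz
    refine hroots z ?_
    have hzs : z ∈ s := by rwa [hl, Multiset.mem_toList] at hz
    exact (Polynomial.mem_roots hp0).mp (Multiset.mem_of_mem_erase (hs ▸ hzs))
  have hlam1 : ∀ k, Complex.normSq (lam k) ≤ 1 := by
    intro k
    by_cases hk : k < l.length
    · have hmem : lam k ∈ l := by
        rw [hlam_def]
        simp only
        rw [List.getD_eq_getElem (hn := hk)]
        exact List.getElem_mem hk
      have habs := hlmem _ hmem
      have h1 : Complex.normSq (lam k) = ‖lam k‖ ^ 2 := (Complex.sq_norm _).symm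
      rw [h1]
      nlinarith [norm_nonneg (lam k)]
    · rw [hlam_def]
      simp only
      rw [List.getD_eq_default _ _ (by omega)]
      simp
  set V : Matrix (Fin n) (Fin n) ℂ := Matrix.of (fun i j : Fin n => pisoF lam i j) with hV
  have hVapp : ∀ i j : Fin n, V i j = pisoF lam i j := fun i j => rfl
  have hrow : ∀ i j : Fin n, (i : ℕ) = n - 1 → V i j = 0 := by
    intro i j hi
    rw [hVapp, hi]
    exact pisoF_last (n - 1) lam hlamm j (by omega)
  have hVV : V * Vᴴ = Matrix.diagonal (fun i : Fin n => if (i : ℕ) = n - 1 then 0 else 1) := by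
    ext i k
    rw [Matrix.mul_apply]
    have hsum : ∑ j : Fin n, V i j * (Vᴴ) j k
        = ∑ j ∈ Finset.range n, pisoF lam i j * (starRingEnd ℂ) (pisoF lam k j) := by
      rw [← Fin.sum_univ_eq_sum_range (fun j => pisoF lam i j * (starRingEnd ℂ) (pisoF lam k j)) n]
      refine Finset.sum_congr rfl fun j _ => ?_
      rw [Matrix.conjTranspose_apply, hVapp, hVapp]
      rfl
    have hpr := piso_row (n - 1) lam hlam1 hlamm i k (by omega) (by omega)
    rw [show (n - 1) + 1 = n by omega] at hpr
    rw [hsum, hpr, Matrix.diagonal_apply]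
    by_cases h1 : i = k
    · subst h1
      by_cases h2 : (i : ℕ) = n - 1
      · rw [if_neg (by tauto), if_pos rfl, if_pos h2]
      · rw [if_pos ⟨rfl, h2⟩, if_pos rfl, if_neg h2]
    · rw [if_neg (by simp [Fin.ext_iff] at h1 ⊢; tauto), if_neg h1]
  refine ⟨V, ?_, ?_⟩
  · rw [IsPartialIsometry, hVV]
    ext i j
    rw [Matrix.diagonal_mul]
    by_cases hi : (i : ℕ) = n - 1
    · rw [hrow i j hi, if_pos hi, zero_mul]
    · rw [if_neg hi, one_mul]
  · have hBT : V.BlockTriangular id := by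
      intro i j hij
      have hji : (j : ℕ) < (i : ℕ) := hij
      rw [hVapp, pisoF, if_neg (by omega), if_neg (by omega)]
    rw [Matrix.charpoly_of_upperTriangular V hBT]
    have hdiag : ∀ i : Fin n, V i i = lam i := fun i => by rw [hVapp, pisoF, if_pos rfl]
    have hsl : (s.map (fun z => X - C z)).prod = (l.map (fun z => X - C z)).prod := by
      rw [← Multiset.coe_toList s, Multiset.map_coe, Multiset.prod_coe]
    have hp : p = (X - C 0) * (l.map (fun z => X - C z)).prod := by
      conv_lhs => rw [← prod_multiset_X_sub_C_of_monic_of_roots_card_eq hmonic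
        (by rw [hcard, hdeg])]
      rw [← hcons, Multiset.map_cons, Multiset.prod_cons, hsl]
    calc ∏ i : Fin n, (X - C (V i i))
        = ∏ k ∈ Finset.range n, (X - C (lam k)) := by
          rw [Finset.prod_congr rfl (fun i _ => by rw [hdiag i])]
          exact Fin.prod_univ_eq_prod_range (fun k => X - C (lam k)) n
      _ = (∏ k ∈ Finset.range (n - 1), (X - C (lam k))) * (X - C (lam (n - 1))) := by
          rw [show n = (n - 1) + 1 by omega]
          exact Finset.prod_range_succ _ _
      _ = (l.map (fun z => X - C z)).prod * X := by
          rw [hlamm, map_zero, sub_zero]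
          congr 1
          rw [← hslen]
          exact list_prod_getD l (fun z => X - C z)
      _ = p := by rw [hp, map_zero, sub_zero, mul_comm]
end

section
/- An n×n complex matrix T satisfies T Tᴴ T = T² if and only if T = PQ for some n×n orthogonal projection matrices P and Q (i.e., matrices satisfying P = Pᴴ = P² and Q = Qᴴ = Q²). -/
open Matrix

open scoped InnerProductSpace in
private theorem aux_fwd {n : ℕ} (T : Matrix (Fin n) (Fin n) ℂ) (h : T * Tᴴ * T = T ^ 2) :
    ∃ P Q : Matrix (Fin n) (Fin n) ℂ,
      P = Pᴴ ∧ P * P = P ∧ Q = Qᴴ ∧ Q * Q = Q ∧ T = P * Q := by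
  classical
  have hmul : ∀ A B : Matrix (Fin n) (Fin n) ℂ,
      Matrix.toEuclideanLin (A * B) = Matrix.toEuclideanLin A ∘ₗ Matrix.toEuclideanLin B := by
    intro A B
    rw [Matrix.toEuclideanLin_eq_toLin]
    exact Matrix.toLin_mul _ (PiLp.basisFun 2 ℂ (Fin n)) _ A B
  set f : EuclideanSpace ℂ (Fin n) →ₗ[ℂ] EuclideanSpace ℂ (Fin n) := Matrix.toEuclideanLin T with hfdef
  have hadjT : Matrix.toEuclideanLin Tᴴ = LinearMap.adjoint f :=
    Matrix.toEuclideanLin_conjTranspose_eq_adjoint T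
  have hmap : (f ∘ₗ LinearMap.adjoint f) ∘ₗ f = f ∘ₗ f := by
    have := congrArg Matrix.toEuclideanLin h
    rwa [hmul, hmul, pow_two, hmul, hadjT] at this
  have hadj : (LinearMap.adjoint f ∘ₗ f) ∘ₗ LinearMap.adjoint f
      = LinearMap.adjoint f ∘ₗ LinearMap.adjoint f := by
    have := congrArg LinearMap.adjoint hmap
    rwa [LinearMap.adjoint_comp, LinearMap.adjoint_comp, LinearMap.adjoint_comp,
      LinearMap.adjoint_adjoint] at this
  set U : Submodule ℂ (EuclideanSpace ℂ (Fin n)) := LinearMap.range f with hU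
  set V : Submodule ℂ (EuclideanSpace ℂ (Fin n)) := LinearMap.range (LinearMap.adjoint f) with hV
  set p : EuclideanSpace ℂ (Fin n) →ₗ[ℂ] EuclideanSpace ℂ (Fin n) :=
    U.subtype ∘ₗ (Submodule.orthogonalProjectionOnto U : EuclideanSpace ℂ (Fin n) →L[ℂ] U).toLinearMap with hp
  set q : EuclideanSpace ℂ (Fin n) →ₗ[ℂ] EuclideanSpace ℂ (Fin n) :=
    V.subtype ∘ₗ (Submodule.orthogonalProjectionOnto V : EuclideanSpace ℂ (Fin n) →L[ℂ] V).toLinearMap with hq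
  have hpapply : ∀ x, p x = (Submodule.orthogonalProjectionOnto U x : EuclideanSpace ℂ (Fin n)) := fun _ => rfl
  have hqapply : ∀ x, q x = (Submodule.orthogonalProjectionOnto V x : EuclideanSpace ℂ (Fin n)) := fun _ => rfl
  have hpmem : ∀ x, x ∈ U → p x = x := by
    intro x hx; rw [hpapply]; exact Submodule.starProjection_eq_self_iff.mpr hx
  have hqmem : ∀ x, x ∈ V → q x = x := by
    intro x hx; rw [hqapply]; exact Submodule.starProjection_eq_self_iff.mpr hx
  have hporth : ∀ x, x ∈ Uᗮ → p x = 0 := by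
    intro x hx; rw [hpapply,
      Submodule.orthogonalProjectionOnto_apply_of_mem_orthogonal hx]; rfl
  -- p fixes range f
  have h1 : ∀ x, p (f x) = f x := fun x => hpmem _ ⟨x, rfl⟩
  -- f kills Vᗮ
  have h2 : ∀ w, w ∈ Vᗮ → f w = 0 := by
    intro w hw
    have : ⟪f w, f w⟫_ℂ = 0 := by
      rw [← LinearMap.adjoint_inner_right]
      exact Submodule.inner_left_of_mem_orthogonal (⟨f w, rfl⟩ : LinearMap.adjoint f (f w) ∈ V) hw
    exact inner_self_eq_zero.mp this
  have h3 : ∀ x, f (q x) = f x := by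
    intro x
    have hsub : x - q x ∈ Vᗮ := by
      rw [hqapply]; exact Submodule.sub_starProjection_mem_orthogonal x
    have := h2 _ hsub
    rw [map_sub, sub_eq_zero] at this
    exact this.symm
  -- key: for v ∈ V, v - f v ∈ Uᗮ
  have h4 : ∀ v, v ∈ V → v - f v ∈ Uᗮ := by
    rintro _ ⟨y, rfl⟩
    rw [Submodule.mem_orthogonal]
    rintro _ ⟨z, rfl⟩
    rw [← LinearMap.adjoint_inner_right, map_sub]
    have hzero : LinearMap.adjoint f (LinearMap.adjoint f y)
        - LinearMap.adjoint f (f (LinearMap.adjoint f y)) = 0 := by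
      have := LinearMap.congr_fun hadj y
      simp only [LinearMap.comp_apply] at this
      rw [sub_eq_zero]
      exact this.symm
    rw [hzero, inner_zero_right]
  -- p ∘ q = f
  have hpq : p ∘ₗ q = f := by
    refine LinearMap.ext fun x => ?_
    simp only [LinearMap.comp_apply]
    have hqxV : q x ∈ V := by rw [hqapply]; exact (Submodule.orthogonalProjectionOnto V x).2
    have : p (q x - f (q x)) = 0 := hporth _ (h4 _ hqxV)
    rw [map_sub, sub_eq_zero] at this
    rw [this, h1, h3]
  -- p, q self-adjoint and idempotent
  have hpsa : LinearMap.adjoint p = p := by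
    symm
    rw [LinearMap.eq_adjoint_iff]
    intro x y
    rw [hpapply, hpapply]
    exact Submodule.inner_starProjection_left_eq_right U x y
  have hqsa : LinearMap.adjoint q = q := by
    symm
    rw [LinearMap.eq_adjoint_iff]
    intro x y
    rw [hqapply, hqapply]
    exact Submodule.inner_starProjection_left_eq_right V x y
  have hpp : p ∘ₗ p = p := by
    refine LinearMap.ext fun x => ?_
    simp only [LinearMap.comp_apply]
    exact hpmem _ (by rw [hpapply]; exact (Submodule.orthogonalProjectionOnto U x).2)
  have hqq : q ∘ₗ q = q := by
    refine LinearMap.ext fun x => ?_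
    simp only [LinearMap.comp_apply]
    exact hqmem _ (by rw [hqapply]; exact (Submodule.orthogonalProjectionOnto V x).2)
  -- back to matrices
  refine ⟨Matrix.toEuclideanLin.symm p, Matrix.toEuclideanLin.symm q, ?_, ?_, ?_, ?_, ?_⟩
  · apply Matrix.toEuclideanLin.injective
    rw [Matrix.toEuclideanLin_conjTranspose_eq_adjoint]
    simp only [LinearEquiv.apply_symm_apply]
    exact hpsa.symm
  · apply Matrix.toEuclideanLin.injective
    rw [hmul]
    simp only [LinearEquiv.apply_symm_apply]
    exact hpp
  · apply Matrix.toEuclideanLin.injective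
    rw [Matrix.toEuclideanLin_conjTranspose_eq_adjoint]
    simp only [LinearEquiv.apply_symm_apply]
    exact hqsa.symm
  · apply Matrix.toEuclideanLin.injective
    rw [hmul]
    simp only [LinearEquiv.apply_symm_apply]
    exact hqq
  · apply Matrix.toEuclideanLin.injective
    rw [hmul]
    simp only [LinearEquiv.apply_symm_apply]
    exact hpq.symm

theorem solution_iff_product_of_projections {n : ℕ} (T : Matrix (Fin n) (Fin n) ℂ) :
    T * Tᴴ * T = T ^ 2 ↔
      ∃ P Q : Matrix (Fin n) (Fin n) ℂ,
        P = Pᴴ ∧ P * P = P ∧ Q = Qᴴ ∧ Q * Q = Q ∧ T = P * Q := by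
  constructor
  · exact aux_fwd T
  · rintro ⟨P, Q, hP, hP2, hQ, hQ2, rfl⟩
    have hH : (P * Q)ᴴ = Q * P := by
      rw [conjTranspose_mul, ← hP, ← hQ]
    rw [hH, pow_two]
    calc P * Q * (Q * P) * (P * Q) = P * (Q * Q) * ((P * P) * Q) := by
          simp only [Matrix.mul_assoc]
      _ = P * Q * (P * Q) := by rw [hP2, hQ2, Matrix.mul_assoc]
end

section
/- An n×n complex matrix A is similar to a Hermitian matrix if and only if A = P H for some positive definite n×n matrix P and some Hermitian n×n matrix H. -/
open Matrix

open scoped ComplexOrder in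
lemma posDef_mul_conjTranspose_self' {n : ℕ} {S : Matrix (Fin n) (Fin n) ℂ}
    (hS : IsUnit S) : (S * Sᴴ).PosDef := by
  refine posDef_iff_dotProduct_mulVec.mpr ⟨isHermitian_mul_conjTranspose_self S, fun x hx => ?_⟩
  have hy : Sᴴ *ᵥ x ≠ 0 := by
    intro h
    apply hx
    have hSH : IsUnit Sᴴ := by
      rw [Matrix.isUnit_iff_isUnit_det, Matrix.det_conjTranspose, isUnit_iff_ne_zero]
      simpa [isUnit_iff_ne_zero] using (Matrix.isUnit_iff_isUnit_det S).mp hS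
    have := congrArg (fun v => (Sᴴ)⁻¹ *ᵥ v) h
    simpa [Matrix.mulVec_mulVec, Matrix.nonsing_inv_mul _ ((Matrix.isUnit_iff_isUnit_det _).mp hSH)] using this
  have key : dotProduct (star x) ((S * Sᴴ) *ᵥ x) = dotProduct (star (Sᴴ *ᵥ x)) (Sᴴ *ᵥ x) := by
    rw [← Matrix.mulVec_mulVec, Matrix.dotProduct_mulVec, Matrix.star_mulVec,
      Matrix.conjTranspose_conjTranspose]
  rw [key]
  exact dotProduct_star_self_pos_iff.mpr hy

open scoped ComplexOrder in
theorem similar_to_hermitian_iff_posdef_mul_hermitian {n : ℕ}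
    (A : Matrix (Fin n) (Fin n) ℂ) :
    (∃ H : Matrix (Fin n) (Fin n) ℂ, H = Hᴴ ∧ MatSimilar A H) ↔
      ∃ (P H : Matrix (Fin n) (Fin n) ℂ), P.PosDef ∧ H = Hᴴ ∧ A = P * H := by
  constructor
  · rintro ⟨H, hH, S, hS, rfl⟩
    have hdet : IsUnit S.det := (Matrix.isUnit_iff_isUnit_det S).mp hS
    refine ⟨S * Sᴴ, (S⁻¹)ᴴ * H * S⁻¹, posDef_mul_conjTranspose_self' hS, ?_, ?_⟩
    · rw [Matrix.conjTranspose_mul, Matrix.conjTranspose_mul,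
        Matrix.conjTranspose_conjTranspose, ← hH, Matrix.mul_assoc]
    · rw [Matrix.conjTranspose_nonsing_inv]
      have h1 : Sᴴ * (Sᴴ)⁻¹ = 1 := Matrix.mul_nonsing_inv _ (by
        rw [Matrix.det_conjTranspose, isUnit_iff_ne_zero]
        simpa [isUnit_iff_ne_zero] using hdet)
      calc S * H * S⁻¹ = S * ((Sᴴ * (Sᴴ)⁻¹) * H) * S⁻¹ := by rw [h1, Matrix.one_mul]
        _ = S * Sᴴ * ((Sᴴ)⁻¹ * H * S⁻¹) := by noncomm_ring
  · rintro ⟨P, H, hP, hH, rfl⟩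
    open scoped MatrixOrder in
    set S := CFC.sqrt P with hSdef
    open scoped MatrixOrder in
    have hSherm : S.IsHermitian := (Matrix.nonneg_iff_posSemidef.mp (CFC.sqrt_nonneg P)).1
    have hSS : S * S = P := by
      open scoped MatrixOrder in
      have := CFC.sq_sqrt P (Matrix.nonneg_iff_posSemidef.mpr hP.posSemidef)
      rwa [pow_two] at this
    have hSdetunit : IsUnit S.det := by
      have : S.det * S.det = P.det := by rw [← Matrix.det_mul, hSS]
      have hPdet : IsUnit P.det := (Matrix.isUnit_iff_isUnit_det P).mp hP.isUnit
      rw [isUnit_iff_ne_zero] at hPdet ⊢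
      intro h
      apply hPdet
      rw [← this, h, mul_zero]
    have hSunit : IsUnit S := (Matrix.isUnit_iff_isUnit_det S).mpr hSdetunit
    refine ⟨S * H * S, ?_, S, hSunit, ?_⟩
    · rw [Matrix.conjTranspose_mul, Matrix.conjTranspose_mul, hSherm.eq, ← hH, Matrix.mul_assoc]
    · have h1 : S * S⁻¹ = 1 := Matrix.mul_nonsing_inv _ hSdetunit
      calc P * H = S * S * H * (S * S⁻¹) := by rw [h1, hSS, Matrix.mul_one]
        _ = S * (S * H * S) * S⁻¹ := by noncomm_ring
end

section
/- The 2×2 complex matrix A with rows (1, 1) and (0, −1) satisfies 'A Aᴴ A is similar to A', but A is not a partial isometry. -/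
open Matrix

theorem counterexample_in_S_not_partial_isometry :
    MatSimilar ((!![1, 1; 0, -1] : Matrix (Fin 2) (Fin 2) ℂ) *
        (!![1, 1; 0, -1] : Matrix (Fin 2) (Fin 2) ℂ)ᴴ *
        (!![1, 1; 0, -1] : Matrix (Fin 2) (Fin 2) ℂ))
      (!![1, 1; 0, -1] : Matrix (Fin 2) (Fin 2) ℂ) ∧
    ¬ IsPartialIsometry (!![1, 1; 0, -1] : Matrix (Fin 2) (Fin 2) ℂ) := by
  have hAH : (!![1, 1; 0, -1] : Matrix (Fin 2) (Fin 2) ℂ)ᴴ = !![1, 0; 1, -1] := by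
    ext i j
    fin_cases i <;> fin_cases j <;> simp [Matrix.conjTranspose_apply]
  constructor
  · refine ⟨!![3, 1; -1, 0], ?_, ?_⟩
    · rw [Matrix.isUnit_iff_isUnit_det]
      simp [Matrix.det_fin_two_of]
    · have hS : (!![3, 1; -1, 0] : Matrix (Fin 2) (Fin 2) ℂ)⁻¹ = !![0, -1; 1, 3] := by
        rw [Matrix.inv_def]
        norm_num [Matrix.adjugate_fin_two, Matrix.det_fin_two_of]
      rw [hS, hAH]
      ext i j
      fin_cases i <;> fin_cases j <;>
        simp [Matrix.mul_apply, Fin.sum_univ_succ] <;> ring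
  · intro h
    rw [IsPartialIsometry, hAH] at h
    have := congrFun (congrFun h 0) 0
    simp [Matrix.mul_apply, Fin.sum_univ_succ] at this
end

section
/- Let A be an n×n complex matrix such that every eigenvalue λ of A satisfies |λ| < 1 and such that the nullity of A is at least the nullity of A − λI for every eigenvalue λ of A. Suppose λ₁, …, λ_d are distinct nonzero complex numbers with |λᵢ| < 1, and n₀, n₁, …, n_d are positive integers with n₀ + n₁ + ⋯ + n_d = n. Then the block diagonal matrix B = J_{n₀}(0) ⊕ J_{n₁}(λ₁) ⊕ ⋯ ⊕ J_{n_d}(λ_d) is similar to a partial isometry. -/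
open Matrix

section SimilarLemmas
variable {n : Type*} [Fintype n] [DecidableEq n]

lemma similar_of_mul {A B S : Matrix n n ℂ} (h : IsUnit S) (hE : A * S = S * B) :
    MatrixSimilar A B := by
  refine ⟨S, h, ?_⟩
  have hd : IsUnit S.det := (Matrix.isUnit_iff_isUnit_det S).mp h
  calc A = A * S * S⁻¹ := by rw [Matrix.mul_assoc, Matrix.mul_nonsing_inv _ hd, Matrix.mul_one]
    _ = S * B * S⁻¹ := by rw [hE]

lemma similar_refl (A : Matrix n n ℂ) : MatrixSimilar A A :=
  similar_of_mul isUnit_one (by rw [Matrix.mul_one, Matrix.one_mul])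

lemma similar_symm {A B : Matrix n n ℂ} (h : MatrixSimilar A B) : MatrixSimilar B A := by
  obtain ⟨S, hS, hE⟩ := h
  have hd : IsUnit S.det := (Matrix.isUnit_iff_isUnit_det S).mp hS
  have hd' : IsUnit S⁻¹.det := by
    rw [Matrix.det_nonsing_inv]
    exact isUnit_ringInverse.mpr hd
  refine ⟨S⁻¹, (Matrix.isUnit_iff_isUnit_det _).mpr hd', ?_⟩
  rw [Matrix.nonsing_inv_nonsing_inv _ hd, hE, ← Matrix.mul_assoc, ← Matrix.mul_assoc,
    Matrix.nonsing_inv_mul _ hd, Matrix.one_mul, Matrix.nonsing_inv_mul_cancel_right _ _ hd]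

lemma similar_trans {A B C : Matrix n n ℂ} (h1 : MatrixSimilar A B) (h2 : MatrixSimilar B C) :
    MatrixSimilar A C := by
  obtain ⟨S, hS, hE⟩ := h1
  obtain ⟨T, hT, hF⟩ := h2
  have hdS : IsUnit S.det := (Matrix.isUnit_iff_isUnit_det S).mp hS
  have hdT : IsUnit T.det := (Matrix.isUnit_iff_isUnit_det T).mp hT
  refine ⟨S * T, hS.mul hT, ?_⟩
  rw [Matrix.mul_inv_rev, hE, hF]
  noncomm_ring

lemma similar_reindex {m : Type*} [Fintype m] [DecidableEq m] (e : n ≃ m)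
    {A B : Matrix n n ℂ} (h : MatrixSimilar A B) :
    MatrixSimilar (Matrix.reindex e e A) (Matrix.reindex e e B) := by
  obtain ⟨S, hS, hE⟩ := h
  have hd : IsUnit S.det := (Matrix.isUnit_iff_isUnit_det S).mp hS
  have hmul : ∀ X Y : Matrix n n ℂ,
      Matrix.reindex e e X * Matrix.reindex e e Y = Matrix.reindex e e (X * Y) := by
    intro X Y
    simp [Matrix.reindex_apply, Matrix.submatrix_mul_equiv]
  have hunit : IsUnit (Matrix.reindex e e S) := by
    rw [Matrix.isUnit_iff_isUnit_det, Matrix.reindex_apply, Matrix.det_submatrix_equiv_self]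
    exact hd
  have hinv : (Matrix.reindex e e S)⁻¹ = Matrix.reindex e e S⁻¹ := by
    apply Matrix.inv_eq_right_inv
    rw [hmul, Matrix.mul_nonsing_inv _ hd]
    simp
  refine ⟨Matrix.reindex e e S, hunit, ?_⟩
  rw [hinv, hmul, hmul, hE]


end SimilarLemmas

section Blocks
variable {p q : Type*} [Fintype p] [DecidableEq p] [Fintype q] [DecidableEq q]

lemma similar_fromBlocks_triangular (P : Matrix p p ℂ) (Q : Matrix q q ℂ)
    (R : Matrix p q ℂ) (h : ∃ X : Matrix p q ℂ, X * Q - P * X = R) :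
    MatrixSimilar (Matrix.fromBlocks P R 0 Q) (Matrix.fromBlocks P 0 0 Q) := by
  obtain ⟨X, hX⟩ := h
  have hunit : IsUnit (Matrix.fromBlocks (1 : Matrix p p ℂ) X (0 : Matrix q p ℂ) (1 : Matrix q q ℂ)) := by
    rw [Matrix.isUnit_iff_isUnit_det, Matrix.det_fromBlocks_zero₂₁]
    simp
  apply similar_of_mul hunit
  rw [Matrix.fromBlocks_multiply, Matrix.fromBlocks_multiply]
  simp only [Matrix.mul_one, Matrix.one_mul, Matrix.mul_zero, Matrix.zero_mul,
    add_zero, zero_add]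
  have h2 : P * X + R = X * Q := by rw [← hX]; abel
  rw [h2]

lemma similar_fromBlocks_congr {A₁ B₁ : Matrix p p ℂ} {A₂ B₂ : Matrix q q ℂ}
    (h1 : MatrixSimilar A₁ B₁) (h2 : MatrixSimilar A₂ B₂) :
    MatrixSimilar (Matrix.fromBlocks A₁ 0 0 A₂) (Matrix.fromBlocks B₁ 0 0 B₂) := by
  obtain ⟨S₁, hS₁, hE₁⟩ := h1
  obtain ⟨S₂, hS₂, hE₂⟩ := h2
  have hd₁ : IsUnit S₁.det := (Matrix.isUnit_iff_isUnit_det S₁).mp hS₁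
  have hd₂ : IsUnit S₂.det := (Matrix.isUnit_iff_isUnit_det S₂).mp hS₂
  have hunit : IsUnit (Matrix.fromBlocks S₁ 0 0 S₂) := by
    rw [Matrix.isUnit_iff_isUnit_det, Matrix.det_fromBlocks_zero₂₁]
    exact hd₁.mul hd₂
  have hinv : (Matrix.fromBlocks S₁ 0 0 S₂)⁻¹ = Matrix.fromBlocks S₁⁻¹ 0 0 S₂⁻¹ := by
    apply Matrix.inv_eq_right_inv
    rw [Matrix.fromBlocks_multiply]
    simp [Matrix.mul_nonsing_inv _ hd₁, Matrix.mul_nonsing_inv _ hd₂,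
      Matrix.fromBlocks_one]
  refine ⟨Matrix.fromBlocks S₁ 0 0 S₂, hunit, ?_⟩
  rw [hinv, Matrix.fromBlocks_multiply, Matrix.fromBlocks_multiply, hE₁, hE₂]
  simp

/-- Sylvester equation solvability: `P = μ•1 + N` with `N^k = 0` and `Q - μ•1` invertible. -/
lemma sylvester_solvable (μ : ℂ) (N : Matrix p p ℂ) (k : ℕ) (hN : N ^ k = 0)
    (Q : Matrix q q ℂ) (hQ : IsUnit (Q - μ • 1).det) (R : Matrix p q ℂ) :
    ∃ X : Matrix p q ℂ, X * Q - (μ • 1 + N) * X = R := by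
  set Z := (Q - μ • (1 : Matrix q q ℂ))⁻¹ with hZ
  refine ⟨∑ j ∈ Finset.range k, N ^ j * R * Z ^ (j + 1), ?_⟩
  have hZQ : ∀ j : ℕ, Z ^ (j+1) * Q - μ • Z ^ (j+1) = Z ^ j := by
    intro j
    calc Z ^ (j+1) * Q - μ • Z ^ (j+1)
        = Z ^ j * (Z * Q) - Z ^ j * (μ • Z) := by
          rw [pow_succ, Matrix.mul_assoc, Matrix.mul_smul]
      _ = Z ^ j * (Z * Q - μ • Z) := (Matrix.mul_sub _ _ _).symm
      _ = Z ^ j * (Z * (Q - μ • 1)) := by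
          rw [Matrix.mul_sub Z, Matrix.mul_smul, Matrix.mul_one]
      _ = Z ^ j := by rw [Matrix.nonsing_inv_mul _ hQ, Matrix.mul_one]
  have step : ∀ j : ℕ, N ^ j * R * Z ^ (j + 1) * Q - (μ • 1 + N) * (N ^ j * R * Z ^ (j + 1))
      = N ^ j * R * Z ^ j - N ^ (j+1) * R * Z ^ (j+1) := by
    intro j
    have h1 : N ^ j * R * Z ^ (j + 1) * Q - μ • (N ^ j * R * Z ^ (j + 1))
        = N ^ j * R * Z ^ j := by
      rw [Matrix.mul_assoc, ← Matrix.mul_smul, ← Matrix.mul_sub, hZQ j]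
    have h2 : (μ • 1 + N) * (N ^ j * R * Z ^ (j + 1))
        = μ • (N ^ j * R * Z ^ (j + 1)) + N ^ (j+1) * R * Z ^ (j+1) := by
      rw [Matrix.add_mul, Matrix.smul_mul, Matrix.one_mul, ← Matrix.mul_assoc,
        ← Matrix.mul_assoc, ← pow_succ']
    rw [h2, ← h1]
    abel
  calc (∑ j ∈ Finset.range k, N ^ j * R * Z ^ (j + 1)) * Q
      - (μ • 1 + N) * (∑ j ∈ Finset.range k, N ^ j * R * Z ^ (j + 1))
      = ∑ j ∈ Finset.range k, (N ^ j * R * Z ^ j - N ^ (j+1) * R * Z ^ (j+1)) := by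
        rw [Matrix.sum_mul, Matrix.mul_sum, ← Finset.sum_sub_distrib]
        exact Finset.sum_congr rfl fun j _ => step j
    _ = N ^ 0 * R * Z ^ 0 - N ^ k * R * Z ^ k := by
        exact Finset.sum_range_sub' (fun j => N ^ j * R * Z ^ j) k
    _ = R := by rw [hN, pow_zero, pow_zero, Matrix.one_mul, Matrix.mul_one,
        Matrix.zero_mul, Matrix.zero_mul, sub_zero]

end Blocks


section Triangular

lemma pow_strict_upper {m : ℕ} (N : Matrix (Fin m) (Fin m) ℂ)
    (hN : ∀ x y : Fin m, (y : ℕ) ≤ (x : ℕ) → N x y = 0) :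
    ∀ (a : ℕ) (x y : Fin m), (y : ℕ) < (x : ℕ) + a → (N ^ a) x y = 0 := by
  intro a
  induction a with
  | zero =>
    intro x y hy
    rw [pow_zero]
    exact Matrix.one_apply_ne (by intro h; subst h; omega)
  | succ a IH =>
    intro x y hy
    rw [pow_succ, Matrix.mul_apply]
    apply Finset.sum_eq_zero
    intro l _
    rcases le_or_gt (y : ℕ) (l : ℕ) with h | h
    · rw [hN l y h, mul_zero]
    · rw [IH x l (by omega), zero_mul]

lemma pow_strict_upper_diag {m : ℕ} (N : Matrix (Fin m) (Fin m) ℂ)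
    (hN : ∀ x y : Fin m, (y : ℕ) ≤ (x : ℕ) → N x y = 0)
    (hsup : ∀ x y : Fin m, (x : ℕ) + 1 = (y : ℕ) → N x y ≠ 0) :
    ∀ (a : ℕ) (x y : Fin m), (y : ℕ) = (x : ℕ) + a → (N ^ a) x y ≠ 0 := by
  intro a
  induction a with
  | zero =>
    intro x y hy
    have : x = y := Fin.ext (by omega)
    subst this
    rw [pow_zero, Matrix.one_apply_eq]
    exact one_ne_zero
  | succ a IH =>
    intro x y hy
    have hx1 : (x : ℕ) + 1 < m := by have := y.isLt; omega
    rw [pow_succ', Matrix.mul_apply]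
    rw [Finset.sum_eq_single (⟨(x : ℕ) + 1, hx1⟩ : Fin m)]
    · exact mul_ne_zero (hsup x _ rfl) (IH _ y (by show (y : ℕ) = (x : ℕ) + 1 + a; omega))
    · intro l _ hl
      rcases le_or_gt (l : ℕ) (x : ℕ) with h | h
      · rw [hN x l h, zero_mul]
      · have : (x : ℕ) + 1 < (l : ℕ) := by
          rcases Nat.lt_or_ge ((x : ℕ) + 1) (l : ℕ) with h' | h'
          · exact h'
          · exfalso; exact hl (Fin.ext (show (l : ℕ) = (x : ℕ) + 1 by omega))
        rw [pow_strict_upper N hN a l y (by omega), mul_zero]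
    · intro h
      exact absurd (Finset.mem_univ _) h

lemma jordanBlock_decomp (m : ℕ) (μ : ℂ) :
    jordanBlock m μ = μ • (1 : Matrix (Fin m) (Fin m) ℂ) + jordanBlock m 0 := by
  ext i j
  by_cases h : (i : ℕ) = (j : ℕ)
  · have : i = j := Fin.ext h
    subst this
    simp [jordanBlock, Matrix.one_apply_eq]
  · have hne : i ≠ j := fun hh => h (by rw [hh])
    simp [jordanBlock, h, Matrix.one_apply_ne hne]

lemma single_run {m : ℕ} (W : Matrix (Fin m) (Fin m) ℂ) (μ : ℂ)
    (htri : ∀ x y : Fin m, (y : ℕ) < (x : ℕ) → W x y = 0)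
    (hdiag : ∀ x, W x x = μ)
    (hsup : ∀ x y : Fin m, (x : ℕ) + 1 = (y : ℕ) → W x y ≠ 0) :
    MatrixSimilar W (jordanBlock m μ) := by
  rcases Nat.eq_zero_or_pos m with hm | hm
  · subst hm
    exact ⟨1, isUnit_one, by ext x; exact x.elim0⟩
  set N : Matrix (Fin m) (Fin m) ℂ := W - μ • 1 with hNdef
  have hNs : ∀ x y : Fin m, (y : ℕ) ≤ (x : ℕ) → N x y = 0 := by
    intro x y h
    rcases eq_or_lt_of_le h with h' | h'
    · have : y = x := Fin.ext h'
      subst this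
      simp [hNdef, hdiag, Matrix.one_apply_eq]
    · have hne : y ≠ x := fun hh => by rw [hh] at h'; omega
      simp [hNdef, htri x y h', Matrix.one_apply_ne' hne]
  have hNsup : ∀ x y : Fin m, (x : ℕ) + 1 = (y : ℕ) → N x y ≠ 0 := by
    intro x y h
    have hne : x ≠ y := fun hh => by rw [hh] at h; omega
    simpa [hNdef, Matrix.one_apply_ne hne] using hsup x y h
  have hml : m - 1 < m := by omega
  set last : Fin m := ⟨m - 1, hml⟩ with hlast
  set S : Matrix (Fin m) (Fin m) ℂ :=
    Matrix.of (fun p q : Fin m => (N ^ (m - 1 - (q : ℕ))) p last) with hSdef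
  have hStri : ∀ p q : Fin m, (q : ℕ) < (p : ℕ) → S p q = 0 := by
    intro p q h
    apply pow_strict_upper N hNs
    have h0 : (last : ℕ) = m - 1 := rfl
    have := q.isLt
    omega
  have hSdiag : ∀ q : Fin m, S q q ≠ 0 := by
    intro q
    apply pow_strict_upper_diag N hNs hNsup
    have h0 : (last : ℕ) = m - 1 := rfl
    have := q.isLt
    omega
  have hSbt : S.BlockTriangular id := by
    intro i j hij
    exact hStri i j hij
  have hUnit : IsUnit S := by
    rw [Matrix.isUnit_iff_isUnit_det, Matrix.det_of_upperTriangular hSbt]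
    rw [isUnit_iff_ne_zero]
    exact Finset.prod_ne_zero_iff.mpr fun q _ => hSdiag q
  apply similar_of_mul hUnit
  have hW : W = μ • 1 + N := by rw [hNdef]; abel
  have key : N * S = S * jordanBlock m 0 := by
    ext p q
    have hLHS : (N * S) p q = (N ^ (m - 1 - (q : ℕ) + 1)) p last := by
      rw [pow_succ', Matrix.mul_apply, Matrix.mul_apply]
      rfl
    rcases Nat.eq_zero_or_pos (q : ℕ) with hq | hq
    · rw [hLHS]
      have h1 : (N ^ (m - 1 - (q : ℕ) + 1)) p last = 0 := by
        apply pow_strict_upper N hNs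
        have h0 : (last : ℕ) = m - 1 := rfl
        have := p.isLt
        omega
      rw [h1, Matrix.mul_apply]
      symm
      apply Finset.sum_eq_zero
      intro l _
      have : jordanBlock m 0 l q = 0 := by
        simp only [jordanBlock, Matrix.of_apply]
        rcases eq_or_ne ((l : ℕ)) ((q : ℕ)) with h | h
        · rw [if_pos h]
        · rw [if_neg h, if_neg (by omega)]
      rw [this, mul_zero]
    · have hq1 : (q : ℕ) - 1 < m := by have := q.isLt; omega
      have hRHS : (S * jordanBlock m 0) p q = S p ⟨(q : ℕ) - 1, hq1⟩ := by
        rw [Matrix.mul_apply]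
        rw [Finset.sum_eq_single (⟨(q : ℕ) - 1, hq1⟩ : Fin m)]
        · have : jordanBlock m 0 (⟨(q : ℕ) - 1, hq1⟩ : Fin m) q = 1 := by
            simp only [jordanBlock, Matrix.of_apply]
            rw [if_neg (show ¬((q : ℕ) - 1 = (q : ℕ)) by omega),
              if_pos (show (q : ℕ) - 1 + 1 = (q : ℕ) by omega)]
          rw [this, mul_one]
        · intro l _ hl
          have hlq : (l : ℕ) ≠ (q : ℕ) - 1 := fun hh => hl (Fin.ext hh)
          have : jordanBlock m 0 l q = 0 := by
            simp only [jordanBlock, Matrix.of_apply]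
            rcases eq_or_ne ((l : ℕ)) ((q : ℕ)) with h | h
            · rw [if_pos h]
            · rw [if_neg h, if_neg (by omega)]
          rw [this, mul_zero]
        · intro h
          exact absurd (Finset.mem_univ _) h
      rw [hLHS, hRHS]
      have harith : m - 1 - (q : ℕ) + 1 = m - 1 - ((q : ℕ) - 1) := by
        have := q.isLt; omega
      rw [harith]
      rfl
  calc W * S = μ • S + N * S := by rw [hW, Matrix.add_mul, Matrix.smul_mul, Matrix.one_mul]
    _ = μ • S + S * jordanBlock m 0 := by rw [key]
    _ = S * (μ • 1 + jordanBlock m 0) := by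
        rw [Matrix.mul_add, Matrix.mul_smul, Matrix.mul_one]
    _ = S * jordanBlock m μ := by rw [← jordanBlock_decomp]

end Triangular


section Runs

noncomputable def Dmat {m : ℕ} (mu : Fin m → ℂ) : Matrix (Fin m) (Fin m) ℂ :=
  open scoped Classical in
  Matrix.of fun x y =>
    if (x : ℕ) = (y : ℕ) then mu x
    else if (x : ℕ) + 1 = (y : ℕ) ∧ mu x = mu y then 1 else 0

lemma runsim : ∀ (m : ℕ) (W : Matrix (Fin m) (Fin m) ℂ) (mu : Fin m → ℂ),
    (∀ x y : Fin m, (y : ℕ) < (x : ℕ) → W x y = 0) →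
    (∀ x, W x x = mu x) →
    (∀ x y : Fin m, (x : ℕ) + 1 = (y : ℕ) → mu x = mu y → W x y ≠ 0) →
    (∀ x y z : Fin m, x ≤ y → y ≤ z → mu x = mu z → mu x = mu y) →
    MatrixSimilar W (Dmat mu) := by
  intro m
  induction m using Nat.strong_induction_on with
  | _ m IH =>
  intro W mu htri hdiag hsup hcont
  rcases Nat.eq_zero_or_pos m with hm | hm
  · subst hm; exact ⟨1, isUnit_one, by ext x; exact x.elim0⟩
  set z0 : Fin m := ⟨0, hm⟩ with hz0
  classical
  let P : ℕ → Prop := fun j => if h : j < m then mu ⟨j, h⟩ ≠ mu z0 else True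
  have hPm : P m := by simp only [P]; rw [dif_neg (lt_irrefl m)]; trivial
  have hPex : ∃ j, P j := ⟨m, hPm⟩
  set t := Nat.find hPex with ht
  have ht_le : t ≤ m := Nat.find_min' hPex hPm
  have htm' : ∀ j, j < t → j < m := by
    intro j hj
    by_contra h
    have hmin := Nat.find_min hPex hj
    simp only [P] at hmin
    rw [dif_neg h] at hmin
    exact hmin trivial
  have hlow : ∀ (j : ℕ) (hj : j < t) (hjm : j < m), mu ⟨j, hjm⟩ = mu z0 := by
    intro j hj hjm
    have hmin := Nat.find_min hPex hj
    simp only [P] at hmin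
    rw [dif_pos hjm] at hmin
    exact not_not.mp hmin
  have ht_pos : 0 < t := by
    rcases Nat.eq_zero_or_pos t with h0 | h; swap
    · exact h
    have hPt := Nat.find_spec hPex
    rw [← ht, h0] at hPt
    simp only [P] at hPt
    rw [dif_pos hm] at hPt
    exact absurd rfl hPt
  rcases eq_or_lt_of_le ht_le with hteq | htlt
  · -- single run
    have hall : ∀ x : Fin m, mu x = mu z0 := by
      intro x
      have := hlow (x : ℕ) (by omega) x.isLt
      simpa using this
    have hsim := single_run W (mu z0) htri (fun x => by rw [hdiag, hall x])
      (fun x y h => hsup x y h (by rw [hall x, hall y]))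
    have hJD : jordanBlock m (mu z0) = Dmat mu := by
      ext x y
      simp only [jordanBlock, Dmat, Matrix.of_apply]
      by_cases h1 : (x : ℕ) = (y : ℕ)
      · rw [if_pos h1, if_pos h1, hall x]
      · rw [if_neg h1, if_neg h1]
        by_cases h2 : (x : ℕ) + 1 = (y : ℕ)
        · rw [if_pos h2, if_pos ⟨h2, by rw [hall x, hall y]⟩]
        · rw [if_neg h2, if_neg (by tauto)]
    rw [hJD] at hsim
    exact hsim
  · -- split off first run
    have hfst : mu ⟨t, htlt⟩ ≠ mu z0 := by
      have hPt := Nat.find_spec hPex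
      simp only [P] at hPt
      rw [dif_pos htlt] at hPt
      exact hPt
    have hup : ∀ x : Fin m, t ≤ (x : ℕ) → mu x ≠ mu z0 := by
      intro x hx hc
      apply hfst
      exact (hcont z0 ⟨t, htlt⟩ x (by simp [Fin.le_def, hz0]) (by simp [Fin.le_def]; omega)
        hc.symm).symm
    set m' := m - t with hm'def
    have hm'add : t + m' = m := by omega
    have hm'lt : m' < m := by omega
    set e : Fin t ⊕ Fin m' ≃ Fin m := finSumFinEquiv.trans (finCongr hm'add) with he
    have he1 : ∀ p : Fin t, ((e (Sum.inl p)) : ℕ) = (p : ℕ) := by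
      intro p; simp [he]
    have he2 : ∀ p : Fin m', ((e (Sum.inr p)) : ℕ) = t + (p : ℕ) := by
      intro p; simp [he]
    set mu0 := mu z0 with hmu0
    set W' := Matrix.reindex e.symm e.symm W with hW'def
    have hW'app : ∀ a b, W' a b = W (e a) (e b) := by
      intro a b; simp [hW'def, Matrix.reindex_apply, Matrix.submatrix_apply]
    set W1 := W'.toBlocks₁₁ with hW1
    set R := W'.toBlocks₁₂ with hR
    set W2 := W'.toBlocks₂₂ with hW2
    have h21 : W'.toBlocks₂₁ = 0 := by
      ext p q
      simp only [Matrix.toBlocks₂₁, Matrix.of_apply, Matrix.zero_apply]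
      rw [hW'app]
      apply htri
      rw [he1, he2]
      omega
    have hW'blocks : W' = Matrix.fromBlocks W1 R 0 W2 := by
      rw [← Matrix.fromBlocks_toBlocks W', h21]
    have hW1app : ∀ p q, W1 p q = W (e (Sum.inl p)) (e (Sum.inl q)) := fun p q =>
      hW'app (Sum.inl p) (Sum.inl q)
    have hW2app : ∀ p q, W2 p q = W (e (Sum.inr p)) (e (Sum.inr q)) := fun p q =>
      hW'app (Sum.inr p) (Sum.inr q)
    have hmu1 : ∀ p : Fin t, mu (e (Sum.inl p)) = mu0 := by
      intro p
      have h1 := hlow (p : ℕ) p.isLt (htm' _ p.isLt)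
      have h2 : e (Sum.inl p) = ⟨(p : ℕ), htm' _ p.isLt⟩ := Fin.ext (by rw [he1])
      rw [h2, h1]
    -- W1 is a single run
    have hsim1 : MatrixSimilar W1 (jordanBlock t mu0) := by
      apply single_run
      · intro x y h
        rw [hW1app]
        apply htri
        rw [he1, he1]
        exact h
      · intro x
        rw [hW1app, hdiag, hmu1]
      · intro x y h
        rw [hW1app]
        apply hsup
        · rw [he1, he1]; exact h
        · rw [hmu1, hmu1]
    -- W2 by induction
    set mu2 : Fin m' → ℂ := fun p => mu (e (Sum.inr p)) with hmu2
    have hsim2 : MatrixSimilar W2 (Dmat mu2) := by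
      apply IH m' hm'lt
      · intro x y h
        rw [hW2app]
        apply htri
        rw [he2, he2]
        omega
      · intro x
        rw [hW2app, hdiag]
      · intro x y h hmu
        rw [hW2app]
        apply hsup
        · rw [he2, he2]; omega
        · exact hmu
      · intro x y z hxy hyz hxz
        apply hcont (e (Sum.inr x)) (e (Sum.inr y)) (e (Sum.inr z))
        · rw [Fin.le_def, he2, he2]
          rw [Fin.le_def] at hxy
          omega
        · rw [Fin.le_def, he2, he2]
          rw [Fin.le_def] at hyz
          omega
        · exact hxz
    -- Sylvester
    have hN1 : ∀ x y : Fin t, (y : ℕ) ≤ (x : ℕ) → (W1 - mu0 • 1) x y = 0 := by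
      intro x y h
      rcases eq_or_lt_of_le h with h' | h'
      · have hxy : y = x := Fin.ext h'
        subst hxy
        simp [Matrix.sub_apply, hW1app, hdiag, hmu1, Matrix.one_apply_eq]
      · have hne : y ≠ x := fun hh => by rw [hh] at h'; omega
        have h0 : W1 x y = 0 := by
          rw [hW1app]; apply htri; rw [he1, he1]; exact h'
        simp [Matrix.sub_apply, h0, Matrix.one_apply_ne' hne]
    have hN1t : (W1 - mu0 • 1) ^ t = 0 := by
      ext x y
      rw [pow_strict_upper _ hN1 t x y (by have := y.isLt; omega)]
      simp
    have hQunit : IsUnit (W2 - mu0 • (1 : Matrix (Fin m') (Fin m') ℂ)).det := by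
      have hbt : (W2 - mu0 • (1 : Matrix (Fin m') (Fin m') ℂ)).BlockTriangular id := by
        intro i j hij
        have hij' : (j : ℕ) < (i : ℕ) := hij
        have hne : j ≠ i := fun hh => by rw [hh] at hij'; omega
        have h0 : W2 i j = 0 := by
          rw [hW2app]; apply htri; rw [he2, he2]; omega
        simp [Matrix.sub_apply, h0, Matrix.one_apply_ne' hne]
      rw [Matrix.det_of_upperTriangular hbt, isUnit_iff_ne_zero]
      apply Finset.prod_ne_zero_iff.mpr
      intro q _
      have hdq : W2 q q = mu2 q := by rw [hW2app, hdiag]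
      have hne : mu2 q ≠ mu0 := by
        apply hup
        rw [he2]
        omega
      have heq : (W2 - mu0 • (1 : Matrix (Fin m') (Fin m') ℂ)) q q = mu2 q - mu0 := by
        simp [Matrix.sub_apply, hdq, Matrix.one_apply_eq]
      rw [heq]
      exact sub_ne_zero.mpr hne
    obtain ⟨X, hX⟩ := sylvester_solvable mu0 (W1 - mu0 • 1) t hN1t W2 hQunit R
    have hW1dec : mu0 • (1 : Matrix (Fin t) (Fin t) ℂ) + (W1 - mu0 • 1) = W1 := by abel
    rw [hW1dec] at hX
    have hsimT : MatrixSimilar W' (Matrix.fromBlocks W1 0 0 W2) := by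
      rw [hW'blocks]
      exact similar_fromBlocks_triangular W1 W2 R ⟨X, hX⟩
    have hsimBD := similar_fromBlocks_congr hsim1 hsim2
    have hsimW : MatrixSimilar W
        (Matrix.reindex e e (Matrix.fromBlocks (jordanBlock t mu0) 0 0 (Dmat mu2))) := by
      have h := similar_reindex e (similar_trans hsimT hsimBD)
      have hWW : Matrix.reindex e e W' = W := by
        rw [hW'def]
        ext a b
        simp [Matrix.reindex_apply, Matrix.submatrix_apply]
      rwa [hWW] at h
    have hDeq : Matrix.reindex e e (Matrix.fromBlocks (jordanBlock t mu0) 0 0 (Dmat mu2))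
        = Dmat mu := by
      ext x y
      obtain ⟨a, rfl⟩ := e.surjective x
      obtain ⟨b, rfl⟩ := e.surjective y
      rw [Matrix.reindex_apply, Matrix.submatrix_apply, Equiv.symm_apply_apply,
        Equiv.symm_apply_apply]
      rcases a with p | p <;> rcases b with q | q
      · -- inl, inl
        rw [Matrix.fromBlocks_apply₁₁]
        simp only [jordanBlock, Dmat, Matrix.of_apply]
        have hvp := he1 p
        have hvq := he1 q
        by_cases h1 : (p : ℕ) = (q : ℕ)
        · rw [if_pos h1,
            if_pos (show ((e (Sum.inl p)) : ℕ) = ((e (Sum.inl q)) : ℕ) by omega), hmu1]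
        · rw [if_neg h1,
            if_neg (show ¬((e (Sum.inl p)) : ℕ) = ((e (Sum.inl q)) : ℕ) by omega)]
          by_cases h2 : (p : ℕ) + 1 = (q : ℕ)
          · rw [if_pos h2, if_pos ⟨by omega, by rw [hmu1, hmu1]⟩]
          · rw [if_neg h2, if_neg (fun hc => h2 (by have := hc.1; omega))]
      · -- inl, inr
        rw [Matrix.fromBlocks_apply₁₂, Matrix.zero_apply]
        simp only [Dmat, Matrix.of_apply]
        have hvp := he1 p
        have hvq := he2 q
        have hpt := p.isLt
        rw [if_neg (show ¬((e (Sum.inl p)) : ℕ) = ((e (Sum.inr q)) : ℕ) by omega),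
          if_neg ?_]
        rintro ⟨-, hc⟩
        rw [hmu1] at hc
        exact hup _ (by omega) hc.symm
      · -- inr, inl
        rw [Matrix.fromBlocks_apply₂₁, Matrix.zero_apply]
        simp only [Dmat, Matrix.of_apply]
        have hvp := he2 p
        have hvq := he1 q
        have hqt := q.isLt
        rw [if_neg (show ¬((e (Sum.inr p)) : ℕ) = ((e (Sum.inl q)) : ℕ) by omega),
          if_neg (fun hc => by have := hc.1; omega)]
      · -- inr, inr
        rw [Matrix.fromBlocks_apply₂₂]
        simp only [Dmat, Matrix.of_apply]
        have hvp := he2 p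
        have hvq := he2 q
        by_cases h1 : (p : ℕ) = (q : ℕ)
        · rw [if_pos h1,
            if_pos (show ((e (Sum.inr p)) : ℕ) = ((e (Sum.inr q)) : ℕ) by omega)]
          try rfl
        · rw [if_neg h1,
            if_neg (show ¬((e (Sum.inr p)) : ℕ) = ((e (Sum.inr q)) : ℕ) by omega)]
          by_cases h2 : (p : ℕ) + 1 = (q : ℕ)
          · by_cases h3 : mu2 p = mu2 q
            · rw [if_pos ⟨h2, h3⟩, if_pos ⟨by omega, h3⟩]
            · rw [if_neg (fun hc => h3 hc.2), if_neg (fun hc => h3 hc.2)]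
          · rw [if_neg (fun hc => h2 hc.1), if_neg (fun hc => by have := hc.1; omega)]
    rw [hDeq] at hsimW
    exact hsimW

end Runs


section PartialIso

variable {n : ℕ}

/-- indicator vector -/
def indv (a : Fin n) : Fin n → ℂ := fun p => if p = a then 1 else 0

/-- sesquilinear dot product (conjugate-linear in the first argument) -/
noncomputable def dotc (f g : Fin n → ℂ) : ℂ := ∑ p, (starRingEnd ℂ) (f p) * g p

lemma dotc_add_right (f g h : Fin n → ℂ) : dotc f (g + h) = dotc f g + dotc f h := by
  simp [dotc, mul_add, Finset.sum_add_distrib]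

lemma dotc_add_left (f g h : Fin n → ℂ) : dotc (f + g) h = dotc f h + dotc g h := by
  simp [dotc, add_mul, Finset.sum_add_distrib]

lemma dotc_smul_right (a : ℂ) (f g : Fin n → ℂ) : dotc f (a • g) = a * dotc f g := by
  simp only [dotc, Pi.smul_apply, smul_eq_mul, Finset.mul_sum]
  exact Finset.sum_congr rfl fun p _ => by ring

lemma dotc_smul_left (a : ℂ) (f g : Fin n → ℂ) :
    dotc (a • f) g = (starRingEnd ℂ) a * dotc f g := by
  simp only [dotc, Pi.smul_apply, smul_eq_mul, _root_.map_mul, Finset.mul_sum]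
  exact Finset.sum_congr rfl fun p _ => by ring

lemma dotc_ind_right (f : Fin n → ℂ) (a : Fin n) :
    dotc f (indv a) = (starRingEnd ℂ) (f a) := by
  rw [dotc, Finset.sum_eq_single a]
  · simp [indv]
  · intro p _ hp
    simp [indv, hp]
  · intro h; exact absurd (Finset.mem_univ _) h

lemma dotc_ind_left (g : Fin n → ℂ) (a : Fin n) : dotc (indv a) g = g a := by
  rw [dotc, Finset.sum_eq_single a]
  · simp [indv]
  · intro p _ hp
    simp [indv, hp]
  · intro h; exact absurd (Finset.mem_univ _) h

lemma dotc_conj (f g : Fin n → ℂ) : dotc f g = (starRingEnd ℂ) (dotc g f) := by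
  simp only [dotc, map_sum]
  exact Finset.sum_congr rfl fun p _ => by
    simp [mul_comm]

lemma dotc_zero_left (g : Fin n → ℂ) : dotc 0 g = 0 := by simp [dotc]

lemma dotc_zero_right (f : Fin n → ℂ) : dotc f 0 = 0 := by simp [dotc]

/-- square root of `1 - |z|²` -/
noncomputable def sq1 (z : ℂ) : ℝ := Real.sqrt (1 - Complex.normSq z)

lemma sq1_pos {z : ℂ} (h : Complex.normSq z < 1) : 0 < sq1 z :=
  Real.sqrt_pos.mpr (by linarith)

lemma sq1_mul_self {z : ℂ} (h : Complex.normSq z < 1) : (sq1 z) * (sq1 z) = 1 - Complex.normSq z :=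
  Real.mul_self_sqrt (by linarith)

variable [NeZero n]

/-- the Takenaka–Malmquist orthogonal complement vectors -/
noncomputable def uvec (mu : Fin n → ℂ) : ℕ → Fin n → ℂ
  | 0 => indv 0
  | (j+1) =>
      if h : j + 1 < n then
        (-(starRingEnd ℂ) (mu ⟨j+1, h⟩)) • uvec mu j + ((sq1 (mu ⟨j+1, h⟩) : ℝ) : ℂ) • indv ⟨j+1, h⟩
      else uvec mu j

/-- the columns of the partial isometry -/
noncomputable def cvec (mu : Fin n → ℂ) (q : Fin n) : Fin n → ℂ :=
  if (q : ℕ) = 0 then 0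
  else ((sq1 (mu q) : ℝ) : ℂ) • uvec mu ((q : ℕ) - 1) + mu q • indv q

/-- the partial isometry matrix -/
noncomputable def Vmat (mu : Fin n → ℂ) : Matrix (Fin n) (Fin n) ℂ :=
  Matrix.of fun p q => cvec mu q p

lemma uvec_supp (mu : Fin n → ℂ) : ∀ (j : ℕ) (p : Fin n), j < (p : ℕ) → uvec mu j p = 0 := by
  intro j
  induction j with
  | zero =>
    intro p hp
    have : p ≠ 0 := by
      intro h; rw [h] at hp; simp at hp
    simp [uvec, indv, this]
  | succ j IH =>
    intro p hp
    rw [uvec]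
    by_cases h : j + 1 < n
    · rw [dif_pos h]
      have h1 : uvec mu j p = 0 := IH p (by omega)
      have h2 : p ≠ ⟨j+1, h⟩ := by
        intro hc
        rw [hc] at hp
        simp at hp
      simp [h1, indv, h2]
    · rw [dif_neg h]
      exact IH p (by omega)

lemma uvec_diag (mu : Fin n → ℂ) : ∀ (j : ℕ) (h : j < n),
    uvec mu j ⟨j, h⟩ = if j = 0 then 1 else ((sq1 (mu ⟨j, h⟩) : ℝ) : ℂ) := by
  intro j h
  cases j with
  | zero => simp [uvec, indv]
  | succ j =>
    rw [uvec, dif_pos h]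
    have h1 : uvec mu j ⟨j+1, h⟩ = 0 := uvec_supp mu j _ (by simp)
    simp [h1, indv]

lemma uvec_norm (mu : Fin n → ℂ) (hlt : ∀ x, Complex.normSq (mu x) < 1) :
    ∀ (j : ℕ), j < n → dotc (uvec mu j) (uvec mu j) = 1 := by
  intro j
  induction j with
  | zero =>
    intro _
    rw [uvec, dotc_ind_left]
    simp [indv]
  | succ j IH =>
    intro hj
    rw [uvec, dif_pos hj]
    set a := -(starRingEnd ℂ) (mu ⟨j+1, hj⟩) with ha
    set b := ((sq1 (mu ⟨j+1, hj⟩) : ℝ) : ℂ) with hb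
    have hu0 : uvec mu j ⟨j+1, hj⟩ = 0 := uvec_supp mu j _ (by simp)
    have hindind : dotc (indv (⟨j+1, hj⟩ : Fin n)) (indv (⟨j+1, hj⟩ : Fin n)) = 1 := by
      rw [dotc_ind_left]
      simp [indv]
    have hIH : dotc (uvec mu j) (uvec mu j) = 1 := IH (by omega)
    simp only [dotc_add_left, dotc_add_right, dotc_smul_left, dotc_smul_right,
      dotc_ind_right, dotc_ind_left, hu0, hIH, hindind, map_zero, mul_zero, zero_mul,
      add_zero, zero_add, mul_one]
    have h1 : (starRingEnd ℂ) a * a = ((Complex.normSq (mu ⟨j+1, hj⟩) : ℝ) : ℂ) := by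
      rw [ha, map_neg, Complex.conj_conj, neg_mul_neg, Complex.mul_conj]
    have h2 : (starRingEnd ℂ) b * b = ((1 - Complex.normSq (mu ⟨j+1, hj⟩) : ℝ) : ℂ) := by
      rw [hb, Complex.conj_ofReal, ← Complex.ofReal_mul, sq1_mul_self (hlt _)]
    have hpt : (a • uvec mu j + b • indv (⟨j+1, hj⟩ : Fin n)) ⟨j+1, hj⟩ = b := by
      simp [hu0, indv]
    rw [hpt, mul_comm a, mul_comm b, h1, h2]
    push_cast
    ring


lemma cvec_eq (mu : Fin n → ℂ) (q : Fin n) (hq : (q : ℕ) ≠ 0) :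
    cvec mu q = ((sq1 (mu q) : ℝ) : ℂ) • uvec mu ((q : ℕ) - 1) + mu q • indv q := by
  rw [cvec, if_neg hq]

lemma cvec_supp (mu : Fin n → ℂ) (q : Fin n) (p : Fin n) (h : (q : ℕ) < (p : ℕ)) :
    cvec mu q p = 0 := by
  rw [cvec]
  by_cases hq : (q : ℕ) = 0
  · rw [if_pos hq]; rfl
  · rw [if_neg hq]
    have h1 : uvec mu ((q : ℕ) - 1) p = 0 := uvec_supp mu _ p (by omega)
    have h2 : p ≠ q := fun hc => by rw [hc] at h; omega
    simp [h1, indv, h2]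

lemma cvec_diag (mu : Fin n → ℂ) (q : Fin n) :
    cvec mu q q = if (q : ℕ) = 0 then 0 else mu q := by
  rw [cvec]
  by_cases hq : (q : ℕ) = 0
  · rw [if_pos hq, if_pos hq]; rfl
  · rw [if_neg hq, if_neg hq]
    have h1 : uvec mu ((q : ℕ) - 1) q = 0 := uvec_supp mu _ q (by omega)
    simp [h1, indv]

lemma cvec_subdiag (mu : Fin n → ℂ) (hlt : ∀ x, Complex.normSq (mu x) < 1)
    (p q : Fin n) (h : (p : ℕ) + 1 = (q : ℕ)) : cvec mu q p ≠ 0 := by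
  rw [cvec, if_neg (by omega)]
  have h2 : p ≠ q := fun hc => by rw [hc] at h; omega
  have h3 : ((q : ℕ) - 1) = (p : ℕ) := by omega
  have h4 : uvec mu ((q : ℕ) - 1) p ≠ 0 := by
    rw [h3]
    have h5 := uvec_diag mu (p : ℕ) p.isLt
    rw [Fin.eta] at h5
    rw [h5]
    by_cases hp0 : (p : ℕ) = 0
    · rw [if_pos hp0]; exact one_ne_zero
    · rw [if_neg hp0]
      exact_mod_cast (sq1_pos (hlt p)).ne'
  have h6 : (p = q) = False := by simp [h2]
  simp only [Pi.add_apply, Pi.smul_apply, indv, h6, if_false, smul_eq_mul, mul_zero, add_zero]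
  exact mul_ne_zero (by exact_mod_cast (sq1_pos (hlt q)).ne') h4

lemma cvec_u_orth (mu : Fin n → ℂ) (hlt : ∀ x, Complex.normSq (mu x) < 1) :
    ∀ (j : ℕ), j < n → ∀ q : Fin n, 1 ≤ (q : ℕ) → (q : ℕ) ≤ j →
      dotc (cvec mu q) (uvec mu j) = 0 := by
  intro j
  induction j with
  | zero => intro _ q h1 h2; omega
  | succ j IH =>
    intro hj q h1 h2
    rcases eq_or_lt_of_le h2 with hq | hq
    · -- base : q = j+1
      have hqe : q = ⟨j+1, hj⟩ := Fin.ext (show (q : ℕ) = j + 1 from by omega)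
      subst hqe
      rw [cvec, if_neg (show ¬(j + 1 = 0) from by omega)]
      rw [uvec, dif_pos hj]
      set a := -(starRingEnd ℂ) (mu ⟨j+1, hj⟩) with ha
      set b := ((sq1 (mu ⟨j+1, hj⟩) : ℝ) : ℂ) with hb
      have hu0 : uvec mu j ⟨j+1, hj⟩ = 0 := uvec_supp mu j _ (by simp)
      have hs : ((⟨j+1, hj⟩ : Fin n) : ℕ) - 1 = j := by simp
      rw [hs]
      have hIH : dotc (uvec mu j) (uvec mu j) = 1 := uvec_norm mu hlt j (by omega)
      have hindu : dotc (indv (⟨j+1, hj⟩ : Fin n)) (uvec mu j) = 0 := by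
        rw [dotc_ind_left, hu0]
      have huind : dotc (uvec mu j) (indv (⟨j+1, hj⟩ : Fin n)) = 0 := by
        rw [dotc_ind_right, hu0, map_zero]
      have hindind : dotc (indv (⟨j+1, hj⟩ : Fin n)) (indv (⟨j+1, hj⟩ : Fin n)) = 1 := by
        rw [dotc_ind_left]; simp [indv]
      simp only [dotc_add_left, dotc_add_right, dotc_smul_left, dotc_smul_right,
        hIH, hindu, huind, hindind, mul_zero, zero_mul, add_zero, zero_add, mul_one]
      rw [hb, Complex.conj_ofReal]
      ring
    · -- step : q ≤ j
      rw [uvec, dif_pos hj]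
      have hIH : dotc (cvec mu q) (uvec mu j) = 0 := IH (by omega) q h1 (by omega)
      have hcs : cvec mu q ⟨j+1, hj⟩ = 0 := cvec_supp mu q _ (show (q : ℕ) < j + 1 from by omega)
      have hcind : dotc (cvec mu q) (indv (⟨j+1, hj⟩ : Fin n)) = 0 := by
        rw [dotc_ind_right, hcs, map_zero]
      simp only [dotc_add_right, dotc_smul_right, hIH, hcind, mul_zero, add_zero]

lemma cvec_gram (mu : Fin n → ℂ) (hlt : ∀ x, Complex.normSq (mu x) < 1) (q r : Fin n) :
    dotc (cvec mu q) (cvec mu r) = if q = r ∧ (q : ℕ) ≠ 0 then 1 else 0 := by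
  by_cases hr : (r : ℕ) = 0
  · have : cvec mu r = 0 := by simp [cvec, hr]
    rw [this, dotc_zero_right, if_neg]
    rintro ⟨hc, hc2⟩
    rw [hc] at hc2
    exact hc2 hr
  by_cases hq : (q : ℕ) = 0
  · have : cvec mu q = 0 := by simp [cvec, hq]
    rw [this, dotc_zero_left, if_neg]
    rintro ⟨-, hc2⟩
    exact hc2 hq
  rcases lt_trichotomy (q : ℕ) (r : ℕ) with hlt' | heq | hgt
  · -- q < r
    rw [if_neg (by rintro ⟨hc, -⟩; rw [hc] at hlt'; omega)]
    conv_lhs => rw [cvec_eq mu r hr]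
    have h1 : dotc (cvec mu q) (uvec mu ((r : ℕ) - 1)) = 0 := by
      apply cvec_u_orth mu hlt _ (by omega) q (by omega) (by omega)
    have h2 : dotc (cvec mu q) (indv r) = 0 := by
      rw [dotc_ind_right, cvec_supp mu q r (by omega), map_zero]
    simp only [dotc_add_right, dotc_smul_right, h1, h2, mul_zero, add_zero]
  · -- q = r
    have hqr : q = r := Fin.ext heq
    subst hqr
    rw [if_pos ⟨rfl, hq⟩]
    conv_lhs => rw [cvec_eq mu q hq]
    set b := ((sq1 (mu q) : ℝ) : ℂ) with hb
    have hu0 : uvec mu ((q : ℕ) - 1) q = 0 := uvec_supp mu _ q (by omega)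
    have hIH : dotc (uvec mu ((q : ℕ) - 1)) (uvec mu ((q : ℕ) - 1)) = 1 :=
      uvec_norm mu hlt _ (by have := q.isLt; omega)
    have huind : dotc (uvec mu ((q : ℕ) - 1)) (indv q) = 0 := by
      rw [dotc_ind_right, hu0, map_zero]
    have hindu : dotc (indv q) (uvec mu ((q : ℕ) - 1)) = 0 := by
      rw [dotc_ind_left, hu0]
    have hindind : dotc (indv q) (indv q) = 1 := by
      rw [dotc_ind_left]; simp [indv]
    simp only [dotc_add_left, dotc_add_right, dotc_smul_left, dotc_smul_right,
      hIH, huind, hindu, hindind, mul_zero, zero_mul, add_zero, zero_add, mul_one]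
    rw [hb, Complex.conj_ofReal, ← Complex.ofReal_mul, sq1_mul_self (hlt q),
      Complex.mul_conj]
    push_cast
    ring
  · -- r < q
    rw [if_neg (by rintro ⟨hc, -⟩; rw [hc] at hgt; omega)]
    rw [dotc_conj]
    conv_lhs => rw [cvec_eq mu q hq]
    have h1 : dotc (cvec mu r) (uvec mu ((q : ℕ) - 1)) = 0 := by
      apply cvec_u_orth mu hlt _ (by omega) r (by omega) (by omega)
    have h2 : dotc (cvec mu r) (indv q) = 0 := by
      rw [dotc_ind_right, cvec_supp mu r q (by omega), map_zero]
    simp only [dotc_add_right, dotc_smul_right, h1, h2, mul_zero, add_zero, map_zero]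

lemma Vmat_partial (mu : Fin n → ℂ) (hlt : ∀ x, Complex.normSq (mu x) < 1) :
    IsPartialIsometry (Vmat mu) := by
  unfold IsPartialIsometry
  rw [Matrix.mul_assoc]
  have hG : ∀ a b : Fin n, ((Vmat mu)ᴴ * Vmat mu) a b
      = if a = b ∧ (a : ℕ) ≠ 0 then 1 else 0 := by
    intro a b
    rw [Matrix.mul_apply, ← cvec_gram mu hlt a b]
    rw [dotc]
    apply Finset.sum_congr rfl
    intro l _
    rw [Matrix.conjTranspose_apply]
    rfl
  ext p q
  rw [Matrix.mul_apply]
  rw [Finset.sum_eq_single q]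
  · rw [hG]
    by_cases hq : (q : ℕ) = 0
    · have : Vmat mu p q = 0 := by
        show cvec mu q p = 0
        rw [cvec, if_pos hq]
        rfl
      rw [this, if_neg (by rintro ⟨-, hc⟩; exact hc hq), mul_zero]
    · rw [if_pos ⟨rfl, hq⟩, mul_one]
  · intro l _ hl
    rw [hG, if_neg (by rintro ⟨hc, -⟩; exact hl hc), mul_zero]
  · intro h; exact absurd (Finset.mem_univ _) h

end PartialIso


lemma partial_reindex {N M : Type*} [Fintype N] [DecidableEq N] [Fintype M] [DecidableEq M]
    (e : N ≃ M) {V : Matrix N N ℂ} (h : IsPartialIsometry V) :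
    IsPartialIsometry (Matrix.reindex e e V) := by
  unfold IsPartialIsometry at *
  have hmul : ∀ X Y : Matrix N N ℂ,
      Matrix.reindex e e X * Matrix.reindex e e Y = Matrix.reindex e e (X * Y) := by
    intro X Y
    simp [Matrix.reindex_apply, Matrix.submatrix_mul_equiv]
  rw [Matrix.conjTranspose_reindex, hmul, hmul, h]

theorem jordan_direct_sum_similar_to_partial_isometry {n : ℕ}
    (A : Matrix (Fin n) (Fin n) ℂ)
    (hA1 : ∀ lam ∈ spectrum ℂ A, ‖lam‖ < 1)
    (hA2 : ∀ lam ∈ spectrum ℂ A, nullity (A - lam • 1) ≤ nullity A)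
    (d : ℕ) (lam : Fin d → ℂ)
    (hdist : Function.Injective lam) (hne : ∀ i, lam i ≠ 0)
    (hlt : ∀ i, ‖lam i‖ < 1)
    (ns : Fin (d + 1) → ℕ) (hpos : ∀ i, 0 < ns i)
    (hsum : ∑ i, ns i = n) :
    ∃ V : Matrix ((i : Fin (d + 1)) × Fin (ns i)) ((i : Fin (d + 1)) × Fin (ns i)) ℂ,
      IsPartialIsometry V ∧
      MatrixSimilar
        (Matrix.blockDiagonal' fun i => jordanBlock (ns i) (Fin.cases 0 lam i)) V := by
  classical
  set v : Fin (d + 1) → ℂ := fun i => Fin.cases 0 lam i with hv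
  have hvinj : Function.Injective v := by
    intro i j h
    cases i using Fin.cases with
    | zero =>
      cases j using Fin.cases with
      | zero => rfl
      | succ j' => exact absurd h.symm (by simpa [hv] using hne j')
    | succ i' =>
      cases j using Fin.cases with
      | zero => exact absurd h (by simpa [hv] using hne i')
      | succ j' =>
        have h2 : lam i' = lam j' := by simpa [hv] using h
        rw [hdist h2]
  have hvlt : ∀ i, Complex.normSq (v i) < 1 := by
    intro i
    rw [← Complex.sq_norm]
    cases i using Fin.cases with
    | zero => simp [hv]
    | succ i' =>
      have h1 := hlt i'
      have h2 : ‖v (Fin.succ i')‖ = ‖lam i'‖ := by simp [hv]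
      rw [h2]
      nlinarith [norm_nonneg (lam i')]
  have hn : 0 < n := by
    rw [← hsum]
    exact Finset.sum_pos (fun i _ => hpos i) ⟨0, Finset.mem_univ 0⟩
  haveI : NeZero n := ⟨hn.ne'⟩
  -- the flattening map
  set ns' : ℕ → ℕ := fun l => if h : l < d + 1 then ns ⟨l, h⟩ else 0 with hns'
  set F : ℕ → ℕ := fun j => ∑ l ∈ Finset.range j, ns' l with hF
  have hFmono : ∀ i j : ℕ, i ≤ j → F i ≤ F j := by
    intro i j hij
    exact Finset.sum_le_sum_of_subset (Finset.range_subset_range.mpr hij)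
  have hFsucc : ∀ i : Fin (d + 1), F ((i : ℕ) + 1) = F (i : ℕ) + ns i := by
    intro i
    simp only [hF]
    rw [Finset.sum_range_succ]
    congr 1
    simp only [hns']
    rw [dif_pos i.isLt]
  have hFtop : F (d + 1) = n := by
    rw [← hsum]
    simp only [hF]
    rw [← Fin.sum_univ_eq_sum_range (fun l => ns' l) (d + 1)]
    apply Finset.sum_congr rfl
    intro i _
    simp only [hns']
    rw [dif_pos i.isLt]
  have hFle : ∀ i : Fin (d + 1), F (i : ℕ) + ns i ≤ n := by
    intro i
    rw [← hFsucc i, ← hFtop]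
    exact hFmono _ _ (by have := i.isLt; omega)
  have hchain : ∀ i j : Fin (d + 1), (i : ℕ) < (j : ℕ) → F (i : ℕ) + ns i ≤ F (j : ℕ) := by
    intro i j h
    rw [← hFsucc i]
    exact hFmono _ _ (by omega)
  set f : ((i : Fin (d + 1)) × Fin (ns i)) → Fin n := fun z =>
    ⟨F (z.1 : ℕ) + (z.2 : ℕ), by have h1 := hFle z.1; have h2 := z.2.isLt; omega⟩ with hf
  have hfval : ∀ z : (i : Fin (d + 1)) × Fin (ns i), ((f z) : ℕ) = F (z.1 : ℕ) + (z.2 : ℕ) :=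
    fun z => rfl
  have hfinj : Function.Injective f := by
    rintro ⟨i, p⟩ ⟨j, q⟩ h
    have hval : F (i : ℕ) + (p : ℕ) = F (j : ℕ) + (q : ℕ) := by
      have h2 := congrArg (fun x : Fin n => (x : ℕ)) h
      exact h2
    have hij : i = j := by
      rcases lt_trichotomy (i : ℕ) (j : ℕ) with hc | hc | hc
      · exfalso; have h3 := hchain i j hc; have h4 := p.isLt; omega
      · exact Fin.ext hc
      · exfalso; have h3 := hchain j i hc; have h4 := q.isLt; omega
    subst hij
    have hsnd : p = q := Fin.ext (by omega)
    rw [hsnd]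
  have hcard : Fintype.card ((i : Fin (d + 1)) × Fin (ns i)) = Fintype.card (Fin n) := by
    rw [Fintype.card_sigma]
    simp only [Fintype.card_fin]
    rw [hsum]
  have hbij : Function.Bijective f :=
    (Fintype.bijective_iff_injective_and_card f).mpr ⟨hfinj, hcard⟩
  set eqv : ((i : Fin (d + 1)) × Fin (ns i)) ≃ Fin n := Equiv.ofBijective f hbij with heqv
  have heqvval : ∀ z, ((eqv z : Fin n) : ℕ) = F (z.1 : ℕ) + (z.2 : ℕ) := fun z => rfl
  set mu : Fin n → ℂ := fun x => v ((eqv.symm x).1) with hmu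
  have hmux : ∀ z, mu (eqv z) = v z.1 := by
    intro z
    show v ((eqv.symm (eqv z)).1) = v z.1
    rw [Equiv.symm_apply_apply]
  have hmult : ∀ x, Complex.normSq (mu x) < 1 := fun x => hvlt _
  -- block location facts
  have hblock : ∀ (x y : Fin n) (zx zy : (i : Fin (d + 1)) × Fin (ns i)),
      x = eqv zx → y = eqv zy → (x : ℕ) ≤ (y : ℕ) → (zy.1 : ℕ) ≤ (zx.1 : ℕ) → zx.1 = zy.1 := by
    intro x y zx zy hx hy hxy hj
    rcases eq_or_lt_of_le hj with h' | h'
    · exact (Fin.ext h').symm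
    · exfalso
      have h1 := hchain zy.1 zx.1 h'
      have h2 := zy.2.isLt
      have h3 : (x : ℕ) = F (zx.1 : ℕ) + (zx.2 : ℕ) := by rw [hx, heqvval]
      have h4 : (y : ℕ) = F (zy.1 : ℕ) + (zy.2 : ℕ) := by rw [hy, heqvval]
      omega
  have hcont : ∀ x y z : Fin n, x ≤ y → y ≤ z → mu x = mu z → mu x = mu y := by
    intro x y z hxy hyz hxz
    obtain ⟨zx, rfl⟩ := eqv.surjective x
    obtain ⟨zy, rfl⟩ := eqv.surjective y
    obtain ⟨zz, rfl⟩ := eqv.surjective z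
    rw [hmux zx, hmux zz] at hxz
    rw [hmux zx, hmux zy]
    have hik : zx.1 = zz.1 := hvinj hxz
    rw [Fin.le_def] at hxy hyz
    have hxyj : zx.1 = zy.1 := by
      rcases le_or_gt ((zy.1 : Fin (d+1)) : ℕ) ((zx.1 : Fin (d+1)) : ℕ) with h | h
      · exact hblock _ _ zx zy rfl rfl hxy h
      · -- zx.1 < zy.1 : contradiction via the block of z
        exfalso
        have h2 : zy.1 = zz.1 := hblock _ _ zy zz rfl rfl hyz (by rw [← hik]; omega)
        have h3 : (zx.1 : ℕ) = (zy.1 : ℕ) := by rw [hik, h2]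
        omega
    rw [hxyj]
  have hmu0 : ∀ x : Fin n, (x : ℕ) = 0 → mu x = 0 := by
    intro x hx
    have hz : x = eqv ⟨0, ⟨0, hpos 0⟩⟩ := by
      apply Fin.ext
      rw [hx, heqvval]
      simp [hF]
    rw [hz, hmux]
    simp [hv]
  -- apply runsim to Vmat
  have hsimV : MatrixSimilar (Vmat mu) (Dmat mu) := by
    apply runsim n (Vmat mu) mu
    · intro x y h
      exact cvec_supp mu y x h
    · intro x
      have := cvec_diag mu x
      show cvec mu x x = mu x
      rw [this]
      by_cases hx : (x : ℕ) = 0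
      · rw [if_pos hx, hmu0 x hx]
      · rw [if_neg hx]
    · intro x y h _
      exact cvec_subdiag mu hmult x y h
    · exact hcont
  have hDapp : ∀ x y : Fin n, Dmat mu x y
      = if (x : ℕ) = (y : ℕ) then mu x
        else if (x : ℕ) + 1 = (y : ℕ) ∧ mu x = mu y then 1 else 0 := fun x y => rfl
  -- identify the reindexed Dmat with the Jordan block diagonal
  have hBD : Matrix.reindex eqv.symm eqv.symm (Dmat mu)
      = Matrix.blockDiagonal' fun i => jordanBlock (ns i) (Fin.cases 0 lam i) := by
    ext z w
    rw [Matrix.reindex_apply, Matrix.submatrix_apply, Equiv.symm_symm]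
    obtain ⟨i, p⟩ := z
    obtain ⟨j, q⟩ := w
    have hvx : ((eqv ⟨i, p⟩ : Fin n) : ℕ) = F (i : ℕ) + (p : ℕ) := rfl
    have hvy : ((eqv ⟨j, q⟩ : Fin n) : ℕ) = F (j : ℕ) + (q : ℕ) := rfl
    by_cases hij : i = j
    · subst hij
      rw [Matrix.blockDiagonal'_apply_eq]
      have hmx : mu (eqv ⟨i, p⟩) = v i := hmux _
      have hmy : mu (eqv ⟨i, q⟩) = v i := hmux _
      rw [hDapp, hmx, hmy, hvx, hvy]
      simp only [jordanBlock, Matrix.of_apply]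
      by_cases h1 : (p : ℕ) = (q : ℕ)
      · rw [if_pos (show F (i : ℕ) + (p : ℕ) = F (i : ℕ) + (q : ℕ) by omega), if_pos h1]
      · rw [if_neg (show ¬(F (i : ℕ) + (p : ℕ) = F (i : ℕ) + (q : ℕ)) by omega), if_neg h1]
        by_cases h2 : (p : ℕ) + 1 = (q : ℕ)
        · rw [if_pos ⟨show F (i : ℕ) + (p : ℕ) + 1 = F (i : ℕ) + (q : ℕ) by omega, by trivial⟩,
            if_pos h2]
        · rw [if_neg (by rintro ⟨hc, -⟩; omega), if_neg h2]
    · rw [Matrix.blockDiagonal'_apply_ne _ _ _ hij]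
      have hne1 : ¬((eqv ⟨i, p⟩ : Fin n) : ℕ) = ((eqv ⟨j, q⟩ : Fin n) : ℕ) := by
        intro hc
        have h3 : (⟨i, p⟩ : (i : Fin (d + 1)) × Fin (ns i)) = ⟨j, q⟩ := eqv.injective (Fin.ext hc)
        exact hij (congrArg Sigma.fst h3)
      have hne2 : ¬(((eqv ⟨i, p⟩ : Fin n) : ℕ) + 1 = ((eqv ⟨j, q⟩ : Fin n) : ℕ)
          ∧ mu (eqv ⟨i, p⟩) = mu (eqv ⟨j, q⟩)) := by
        rintro ⟨-, hc⟩
        rw [hmux, hmux] at hc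
        exact hij (hvinj hc)
      rw [hDapp, if_neg hne1, if_neg hne2]
  -- assemble
  refine ⟨Matrix.reindex eqv.symm eqv.symm (Vmat mu), partial_reindex eqv.symm (Vmat_partial mu hmult), ?_⟩
  have hsim2 := similar_reindex eqv.symm (similar_symm hsimV)
  rwa [hBD] at hsim2
end
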